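/- Let (X,T) be a topological dynamical system with finite topological entropy and K ⊆ X compact. If h(T,K) > h*(T,X), then for each real number h with 0 ≤ h ≤ h(T,K) − h*(T,X), the closure of the set {h(T,K') : K' ⊆ K compact} has nonempty intersection with the interval [h, h + h*(T,X)]. -/

import Mathlib

open Set Filter MeasureTheory
open scoped Classical ENNReal

noncomputable section

namespace Lowering

variable {X : Type*} [TopologicalSpace X]

/-- A finite open cover of the whole space. -/
def IsFinOpenCover (U : Finset (Set X)) : Prop :=
  (∀ u ∈ U, IsOpen u) ∧ ⋃₀ (U : Set (Set X)) = Set.univ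

/-- The dynamical refinement `⋁_{i=0}^{n-1} T⁻ⁱ U` of a family of subsets. -/
def dynRefine (T : X → X) (U : Set (Set X)) (n : ℕ) : Set (Set X) :=
  {V | ∃ f : ℕ → Set X, (∀ i < n, f i ∈ U) ∧ V = ⋂ i ∈ Finset.range n, T^[i] ⁻¹' f i}

/-- `N(V, K)`: the minimal cardinality of a finite subfamily of `V` covering `K`
(with the convention `N(V, ∅) = 1`). -/
def coverNum (V : Set (Set X)) (K : Set X) : ℕ :=
  if K = ∅ then 1
  else sInf {n : ℕ | ∃ F : Finset (Set X), ↑F ⊆ V ∧ K ⊆ ⋃₀ (F : Set (Set X)) ∧ F.card = n}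

/-- `h_U(T, K) = limsup_n (1/n) log N(⋁_{i=0}^{n-1} T⁻ⁱU, K)`. -/
def coverEntropyOf (T : X → X) (U : Finset (Set X)) (K : Set X) : EReal :=
  Filter.atTop.limsup fun n : ℕ =>
    ((Real.log (coverNum (dynRefine T (↑U) n) K) / n : ℝ) : EReal)

/-- The covering entropy `h(T, K)` of a subset `K`. -/
def coverEntropy (T : X → X) (K : Set X) : EReal :=
  ⨆ (U : Finset (Set X)) (_ : IsFinOpenCover U), coverEntropyOf T U K

/-- `n_{T,U}(E)`: the largest `j` (possibly `∞`) such that `Tⁱ E` is contained in some member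
of `U` for all `0 ≤ i ≤ j - 1`. -/
def bowenN (T : X → X) (U : Finset (Set X)) (E : Set X) : ℕ∞ :=
  ⨆ j ∈ {j : ℕ | ∀ i < j, ∃ u ∈ U, T^[i] '' E ⊆ u}, (j : ℕ∞)

/-- The weight `exp (-λ n)`, with the conventions `0 ⬝ ∞ = 0`. -/
def expWeight (lam : ℝ) (n : ℕ∞) : ℝ≥0∞ :=
  if h : n = ⊤ then (if 0 < lam then 0 else if lam < 0 then ⊤ else 1)
  else ENNReal.ofReal (Real.exp (-lam * (n.untop h : ℕ)))

/-- `m_{T,U}(K, λ, k)` (with the paper's conventions for `K = ∅`). -/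
def mPre (T : X → X) (U : Finset (Set X)) (K : Set X) (lam : ℝ) (k : ℕ) : ℝ≥0∞ :=
  if K = ∅ then (if lam < 0 then ⊤ else if lam = 0 then 1 else 0)
  else ⨅ (𝓔 : Set (Set X)) (_ : 𝓔.Countable) (_ : K ⊆ ⋃₀ 𝓔)
        (_ : ∀ E ∈ 𝓔, ∃ V ∈ dynRefine T (↑U) k, E ⊆ V),
      ∑' E : 𝓔, expWeight lam (bowenN T U (E : Set X))

/-- `m_{T,U}(K, λ) = lim_{k → ∞} m_{T,U}(K, λ, k)`, the limit of the nondecreasing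
sequence `k ↦ m_{T,U}(K, λ, k)`, i.e. its supremum. -/
def mBowen (T : X → X) (U : Finset (Set X)) (K : Set X) (lam : ℝ) : ℝ≥0∞ :=
  ⨆ k : ℕ, mPre T U K lam k

/-- `h^B_U(T,K) = inf {λ : m_{T,U}(K,λ) = 0}`. -/
def bowenEntropyOf (T : X → X) (U : Finset (Set X)) (K : Set X) : EReal :=
  ⨅ (lam : ℝ) (_ : mBowen T U K lam = 0), (lam : EReal)

/-- The dimensional (Bowen) entropy `h^B(T, K)` of a subset `K`. -/
def bowenEntropy (T : X → X) (K : Set X) : EReal :=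
  ⨆ (U : Finset (Set X)) (_ : IsFinOpenCover U), bowenEntropyOf T U K

/-- Souslin sets: sets of the form `⋃_{(i₁,i₂,…) ∈ ℕ^ℕ} ⋂_k E_{i₁,…,i_k}` with all the
`E_{i₁,…,i_k}` closed. -/
def IsSouslin (K : Set X) : Prop :=
  ∃ E : List ℕ → Set X, (∀ l, IsClosed (E l)) ∧
    K = ⋃ σ : ℕ → ℕ, ⋂ k : ℕ, E (List.ofFn fun i : Fin (k + 1) => σ i)

def Lowerable (T : X → X) : Prop :=
  ∀ h : ℝ, 0 ≤ h → (h : EReal) ≤ coverEntropy T Set.univ →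
    ∃ K : Set X, IsClosed K ∧ coverEntropy T K = (h : EReal)

def HereditarilyLowerable (T : X → X) : Prop :=
  ∀ K : Set X, IsClosed K → ∀ h : ℝ, 0 ≤ h → (h : EReal) ≤ coverEntropy T K →
    ∃ K' ⊆ K, IsClosed K' ∧ coverEntropy T K' = (h : EReal)

def DLowerable (T : X → X) : Prop :=
  ∀ h : ℝ, 0 ≤ h → (h : EReal) ≤ coverEntropy T Set.univ →
    ∃ K : Set X, bowenEntropy T K = (h : EReal)

def DHereditarilyLowerable (T : X → X) : Prop :=
  ∀ K : Set X, IsSouslin K → ∀ h : ℝ, 0 ≤ h → (h : EReal) ≤ bowenEntropy T K →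
    ∃ K' ⊆ K, bowenEntropy T K' = (h : EReal)

/-- `Φ_ε(x) = {y : d(Tⁿx, Tⁿy) ≤ ε for all n ≥ 0}`. -/
def phiSet {Y : Type*} [PseudoMetricSpace Y] (T : Y → Y) (ε : ℝ) (x : Y) : Set Y :=
  {y | ∀ n : ℕ, dist (T^[n] x) (T^[n] y) ≤ ε}

/-- Asymptotic h-expansiveness: `lim_{ε → 0+} sup_x h(T, Φ_ε(x)) = 0`. -/
def AsympHExpansive {Y : Type*} [MetricSpace Y] (T : Y → Y) : Prop :=
  Filter.Tendsto (fun ε : ℝ => ⨆ x : Y, coverEntropy T (phiSet T ε x))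
    (nhdsWithin 0 (Set.Ioi 0)) (nhds (0 : EReal))

/-- `N((U₁)₀ⁿ⁻¹ | (U₂)₀ⁿ⁻¹) = max_{V ∈ (U₂)₀ⁿ⁻¹} N((U₁)₀ⁿ⁻¹, V)`. -/
def relCoverNum (T : X → X) (U1 U2 : Finset (Set X)) (n : ℕ) : ℕ :=
  sSup {k : ℕ | ∃ V ∈ dynRefine T (↑U2) n, k = coverNum (dynRefine T (↑U1) n) V}

/-- The topologically conditional entropy `h^*(T, X)`. -/
def condTopEntropy (T : X → X) : EReal :=
  ⨅ (U2 : Finset (Set X)) (_ : IsFinOpenCover U2),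
    ⨆ (U1 : Finset (Set X)) (_ : IsFinOpenCover U1),
      ((⨅ n : ℕ, Real.log (relCoverNum T U1 U2 (n + 1)) / (n + 1) : ℝ) : EReal)


section AuxCover

variable {X : Type*} [TopologicalSpace X]

/-- The family `V` admits a finite subfamily covering the whole space. -/
def CoversUniv (V : Set (Set X)) : Prop :=
  ∃ F : Finset (Set X), ↑F ⊆ V ∧ (Set.univ : Set X) ⊆ ⋃₀ (F : Set (Set X))

lemma lognat_nonneg (k : ℕ) : 0 ≤ Real.log k := by
  rcases Nat.eq_zero_or_pos k with h | h
  · simp [h]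
  · exact Real.log_nonneg (by exact_mod_cast h)

lemma coverNum_le_card {V : Set (Set X)} {K : Set X} {F : Finset (Set X)}
    (hF : ↑F ⊆ V) (hc : K ⊆ ⋃₀ (F : Set (Set X))) (h1 : 1 ≤ F.card) :
    coverNum V K ≤ F.card := by
  unfold coverNum
  split_ifs with h
  · exact h1
  · exact Nat.sInf_le ⟨F, hF, hc, rfl⟩

lemma coverNum_le_card' {V : Set (Set X)} {K : Set X} {F : Finset (Set X)}
    (hF : ↑F ⊆ V) (hc : K ⊆ ⋃₀ (F : Set (Set X))) :
    coverNum V K ≤ F.card + 1 := by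
  unfold coverNum
  split_ifs with h
  · omega
  · refine le_trans (Nat.sInf_le ?_) (Nat.le_succ _)
    exact ⟨F, hF, hc, rfl⟩

lemma one_le_coverNum {V : Set (Set X)} {K : Set X} (h : CoversUniv V) :
    1 ≤ coverNum V K := by
  unfold coverNum
  split_ifs with hK
  · exact le_refl 1
  · obtain ⟨F, hF, hcov⟩ := h
    have hne : {n : ℕ | ∃ F : Finset (Set X), ↑F ⊆ V ∧ K ⊆ ⋃₀ (F : Set (Set X)) ∧ F.card = n}.Nonempty :=
      ⟨F.card, F, hF, (Set.subset_univ K).trans hcov, rfl⟩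
    obtain ⟨G, hG, hGc, hGcard⟩ := Nat.sInf_mem hne
    rw [← hGcard]
    obtain ⟨x, hx⟩ := Set.nonempty_iff_ne_empty.2 hK
    obtain ⟨t, ht, -⟩ := hGc hx
    exact Finset.card_pos.mpr ⟨t, ht⟩

lemma exists_min_cover {V : Set (Set X)} {K : Set X} (h : CoversUniv V) (hK : K ≠ ∅) :
    ∃ F : Finset (Set X), ↑F ⊆ V ∧ K ⊆ ⋃₀ (F : Set (Set X)) ∧ F.card = coverNum V K ∧
      1 ≤ F.card := by
  obtain ⟨F0, hF0, hcov⟩ := h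
  have hne : {n : ℕ | ∃ F : Finset (Set X), ↑F ⊆ V ∧ K ⊆ ⋃₀ (F : Set (Set X)) ∧ F.card = n}.Nonempty :=
    ⟨F0.card, F0, hF0, (Set.subset_univ K).trans hcov, rfl⟩
  obtain ⟨G, hG, hGc, hGcard⟩ := Nat.sInf_mem hne
  have hcn : coverNum V K = sInf {n : ℕ | ∃ F : Finset (Set X), ↑F ⊆ V ∧ K ⊆ ⋃₀ (F : Set (Set X)) ∧ F.card = n} := by
    unfold coverNum; rw [if_neg hK]
  refine ⟨G, hG, hGc, by rw [hcn, hGcard], ?_⟩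
  obtain ⟨x, hx⟩ := Set.nonempty_iff_ne_empty.2 hK
  obtain ⟨t, ht, -⟩ := hGc hx
  exact Finset.card_pos.mpr ⟨t, ht⟩

lemma coverNum_mono_set {V : Set (Set X)} {K1 K2 : Set X} (h : CoversUniv V)
    (hsub : K1 ⊆ K2) : coverNum V K1 ≤ coverNum V K2 := by
  by_cases hK2 : K2 = ∅
  · have hK1 : K1 = ∅ := by
      rw [hK2] at hsub; exact Set.subset_eq_empty hsub rfl
    simp [coverNum, hK1, hK2]
  · obtain ⟨F, hF, hFc, hFcard, hF1⟩ := exists_min_cover h hK2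
    rw [← hFcard]
    exact coverNum_le_card hF (hsub.trans hFc) hF1

lemma coverNum_union_le {V : Set (Set X)} {K1 K2 : Set X} (h : CoversUniv V) :
    coverNum V (K1 ∪ K2) ≤ coverNum V K1 + coverNum V K2 := by
  by_cases h1 : K1 = ∅
  · rw [h1, Set.empty_union]
    have h0 : coverNum V (∅ : Set X) = 1 := by simp [coverNum]
    rw [h0]; omega
  · by_cases h2 : K2 = ∅
    · rw [h2, Set.union_empty]
      have h0 : coverNum V (∅ : Set X) = 1 := by simp [coverNum]
      rw [h0]; omega
    · obtain ⟨F1, hF1, hF1c, hF1card, hF11⟩ := exists_min_cover h h1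
      obtain ⟨F2, hF2, hF2c, hF2card, hF21⟩ := exists_min_cover h h2
      have hsub : ↑(F1 ∪ F2) ⊆ V := by
        rw [Finset.coe_union]; exact Set.union_subset hF1 hF2
      have hcov : K1 ∪ K2 ⊆ ⋃₀ ((F1 ∪ F2 : Finset (Set X)) : Set (Set X)) := by
        rw [Finset.coe_union, Set.sUnion_union]
        exact Set.union_subset_union hF1c hF2c
      calc coverNum V (K1 ∪ K2) ≤ (F1 ∪ F2).card :=
            coverNum_le_card hsub hcov (by
              have := Finset.card_le_card (Finset.subset_union_left (s₁ := F1) (s₂ := F2))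
              omega)
        _ ≤ F1.card + F2.card := Finset.card_union_le _ _
        _ = coverNum V K1 + coverNum V K2 := by rw [hF1card, hF2card]

lemma coverNum_biUnion_le {V : Set (Set X)} (h : CoversUniv V) {ι : Type*}
    (s : Finset ι) (f : ι → Set X) :
    coverNum V (⋃ i ∈ s, f i) ≤ (∑ i ∈ s, coverNum V (f i)) + 1 := by
  classical
  induction s using Finset.cons_induction with
  | empty => simp [coverNum]
  | cons a s ha ih =>
      have hset : (⋃ i ∈ Finset.cons a s ha, f i) = f a ∪ ⋃ i ∈ s, f i := by
        simp [Finset.cons_eq_insert]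
      rw [hset, Finset.sum_cons]
      calc coverNum V (f a ∪ ⋃ i ∈ s, f i)
          ≤ coverNum V (f a) + coverNum V (⋃ i ∈ s, f i) := coverNum_union_le h
        _ ≤ coverNum V (f a) + ((∑ i ∈ s, coverNum V (f i)) + 1) := by omega
        _ = (coverNum V (f a) + ∑ i ∈ s, coverNum V (f i)) + 1 := by omega

end AuxCover
section AuxRefine

variable {X : Type*} [TopologicalSpace X]

lemma biInter_range_add (T : X → X) (f : ℕ → Set X) (n m : ℕ) :
    (⋂ i ∈ Finset.range (n + m), T^[i] ⁻¹' f i)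
      = (⋂ i ∈ Finset.range n, T^[i] ⁻¹' f i) ∩
        (T^[n]) ⁻¹' (⋂ j ∈ Finset.range m, T^[j] ⁻¹' f (n + j)) := by
  ext x
  simp only [Set.mem_iInter, Finset.mem_range, Set.mem_inter_iff, Set.mem_preimage]
  constructor
  · intro hx
    refine ⟨fun i hi => hx i (by omega), fun j hj => ?_⟩
    have h2 := hx (n + j) (by omega)
    have e : T^[n + j] x = T^[j] (T^[n] x) := by
      rw [add_comm n j, Function.iterate_add_apply]
    rwa [e] at h2
  · rintro ⟨h1, h2⟩ i hi
    rcases Nat.lt_or_ge i n with h | h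
    · exact h1 i h
    · have hj : i - n < m := by omega
      have h3 := h2 (i - n) hj
      have e : T^[i] x = T^[i - n] (T^[n] x) := by
        rw [← Function.iterate_add_apply]
        congr 1
        omega
      have e2 : n + (i - n) = i := by omega
      rw [e2] at h3
      rwa [e]

lemma univ_mem_dynRefine_zero (T : X → X) (U : Set (Set X)) :
    (Set.univ : Set X) ∈ dynRefine T U 0 := by
  refine ⟨fun _ => Set.univ, fun i hi => absurd hi (Nat.not_lt_zero i), ?_⟩
  simp

lemma inter_preimage_mem_dynRefine {T : X → X} {U : Set (Set X)} {n m : ℕ} {A B : Set X}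
    (hA : A ∈ dynRefine T U n) (hB : B ∈ dynRefine T U m) :
    A ∩ (T^[n]) ⁻¹' B ∈ dynRefine T U (n + m) := by
  obtain ⟨fa, hfa, rfl⟩ := hA
  obtain ⟨fb, hfb, rfl⟩ := hB
  classical
  refine ⟨fun i => if i < n then fa i else fb (i - n), fun i hi => ?_, ?_⟩
  · by_cases h : i < n
    · simpa [h] using hfa i h
    · simp only [h, if_false]
      exact hfb _ (by omega)
  · rw [biInter_range_add]
    congr 1
    · apply Set.iInter_congr; intro i; apply Set.iInter_congr; intro hi
      rw [Finset.mem_range] at hi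
      simp [hi]
    · refine congrArg (fun S => T^[n] ⁻¹' S) ?_
      apply Set.iInter_congr; intro j; apply Set.iInter_congr; intro hj
      have : ¬ (n + j < n) := by omega
      simp [this]

lemma dynRefine_split {T : X → X} {U : Set (Set X)} {n m : ℕ} {V : Set X}
    (hV : V ∈ dynRefine T U (n + m)) :
    ∃ A ∈ dynRefine T U n, ∃ B ∈ dynRefine T U m, V = A ∩ (T^[n]) ⁻¹' B := by
  obtain ⟨f, hf, rfl⟩ := hV
  exact ⟨_, ⟨f, fun i hi => hf i (by omega), rfl⟩,
        _, ⟨fun j => f (n + j), fun j hj => hf _ (by omega), rfl⟩,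
        biInter_range_add T f n m⟩

lemma dynRefine_prefix {T : X → X} {U : Set (Set X)} {n m : ℕ} (hnm : n ≤ m) {V : Set X}
    (hV : V ∈ dynRefine T U m) : ∃ V' ∈ dynRefine T U n, V ⊆ V' := by
  obtain ⟨f, hf, rfl⟩ := hV
  refine ⟨_, ⟨f, fun i hi => hf i (by omega), rfl⟩, ?_⟩
  intro x hx
  simp only [Set.mem_iInter, Finset.mem_range] at hx ⊢
  exact fun i hi => hx i (by omega)

lemma exists_fullCover (T : X → X) {U : Finset (Set X)}
    (hU : ⋃₀ (U : Set (Set X)) = Set.univ) (n : ℕ) :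
    ∃ F : Finset (Set X), ↑F ⊆ dynRefine T (↑U) n ∧
      (Set.univ : Set X) ⊆ ⋃₀ (F : Set (Set X)) ∧ F.card ≤ U.card ^ n := by
  classical
  refine ⟨(Finset.univ : Finset (Fin n → {u // u ∈ U})).image
      (fun φ => ⋂ i ∈ Finset.range n,
        T^[i] ⁻¹' (if h : i < n then ((φ ⟨i, h⟩ : Set X)) else Set.univ)), ?_, ?_, ?_⟩
  · intro V hV
    simp only [Finset.coe_image, Set.mem_image] at hV
    obtain ⟨φ, -, rfl⟩ := hV
    refine ⟨fun i => if h : i < n then ((φ ⟨i, h⟩ : Set X)) else Set.univ, fun i hi => ?_, rfl⟩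
    simp only [hi, dif_pos]
    exact (φ ⟨i, hi⟩).2
  · intro x _
    have hx : ∀ i : Fin n, ∃ u : {u // u ∈ U}, T^[(i : ℕ)] x ∈ (u : Set X) := by
      intro i
      have : T^[(i : ℕ)] x ∈ ⋃₀ (U : Set (Set X)) := by rw [hU]; trivial
      obtain ⟨u, hu, hxu⟩ := this
      exact ⟨⟨u, hu⟩, hxu⟩
    choose φ hφ using hx
    refine ⟨_, Finset.mem_coe.2 (Finset.mem_image.2 ⟨φ, Finset.mem_univ _, rfl⟩), ?_⟩
    simp only [Set.mem_iInter, Finset.mem_range, Set.mem_preimage]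
    intro i hi
    simp only [hi, dif_pos]
    exact hφ ⟨i, hi⟩
  · refine Finset.card_image_le.trans ?_
    rw [Finset.card_univ]
    rw [Fintype.card_fun]
    simp

lemma coversUniv_dynRefine (T : X → X) {U : Finset (Set X)}
    (hU : ⋃₀ (U : Set (Set X)) = Set.univ) (n : ℕ) :
    CoversUniv (dynRefine T (↑U) n) := by
  obtain ⟨F, h1, h2, -⟩ := exists_fullCover T hU n
  exact ⟨F, h1, h2⟩

lemma coverNum_dynRefine_mono_n {T : X → X} {U : Finset (Set X)}
    (hU : ⋃₀ (U : Set (Set X)) = Set.univ) {E : Set X} {n m : ℕ} (hnm : n ≤ m) :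
    coverNum (dynRefine T (↑U) n) E ≤ coverNum (dynRefine T (↑U) m) E := by
  classical
  by_cases hE : E = ∅
  · simp [coverNum, hE]
  · obtain ⟨F, hF, hFc, hFcard, hF1⟩ := exists_min_cover (coversUniv_dynRefine T hU m) hE
    have hch : ∀ V : {V // V ∈ F}, ∃ V' ∈ dynRefine T (↑U) n, (V : Set X) ⊆ V' :=
      fun V => dynRefine_prefix hnm (hF V.2)
    choose g hg1 hg2 using hch
    rw [← hFcard]
    have h1F : 1 ≤ (F.attach.image g).card := by
      have : F.attach.Nonempty := Finset.attach_nonempty_iff.2 (Finset.card_pos.1 hF1)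
      exact Finset.card_pos.2 (this.image g)
    refine le_trans (coverNum_le_card (F := F.attach.image g) ?_ ?_ h1F) ?_
    · intro V hV
      simp only [Finset.coe_image, Set.mem_image, Finset.mem_coe, Finset.mem_attach] at hV
      obtain ⟨v, -, rfl⟩ := hV
      exact hg1 v
    · intro x hx
      obtain ⟨V, hV, hxV⟩ := hFc hx
      refine ⟨g ⟨V, hV⟩, ?_, hg2 ⟨V, hV⟩ hxV⟩
      simp only [Finset.coe_image, Set.mem_image]
      exact ⟨⟨V, hV⟩, by simp, rfl⟩
    · exact (Finset.card_image_le).trans (by rw [Finset.card_attach])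

lemma coverNum_le_one_of_subset_cell {T : X → X} {U : Set (Set X)} {n : ℕ}
    {E V : Set X} (hV : V ∈ dynRefine T U n) (hEV : E ⊆ V) :
    coverNum (dynRefine T U n) E ≤ 1 := by
  classical
  have : E ⊆ ⋃₀ (({V} : Finset (Set X)) : Set (Set X)) := by
    simpa using hEV
  simpa using coverNum_le_card (by simpa using hV) this (by simp)

end AuxRefine
section AuxLimsup
open Filter

lemma EReal_le_coe_of_forall_add {x : EReal} {y : ℝ}
    (h : ∀ η : ℝ, 0 < η → x ≤ ((y + η : ℝ) : EReal)) : x ≤ (y : EReal) := by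
  induction x using EReal.rec with
  | bot => exact bot_le
  | coe r =>
      refine EReal.coe_le_coe_iff.2 (le_of_forall_pos_le_add fun η hη => ?_)
      exact EReal.coe_le_coe_iff.1 (h η hη)
  | top =>
      have h2 := h 1 one_pos
      rw [top_le_iff] at h2
      exact absurd h2 (EReal.coe_ne_top _)

lemma limsup_coe_nonneg {u : ℕ → ℝ} (hu : ∀ n, 0 ≤ u n) :
    (0 : EReal) ≤ Filter.atTop.limsup (fun n => ((u n : ℝ) : EReal)) :=
  le_limsup_of_frequently_le (Filter.Frequently.of_forall (fun n => by exact_mod_cast hu n))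

lemma limsup_coe_le_of_eventually {u : ℕ → ℝ} {b : ℝ}
    (h : ∀ᶠ n in Filter.atTop, u n ≤ b) :
    Filter.atTop.limsup (fun n => ((u n : ℝ) : EReal)) ≤ (b : EReal) :=
  Filter.limsup_le_of_le (by isBoundedDefault) (h.mono fun n hn => by exact_mod_cast hn)

lemma limsup_max_le {u v : ℕ → EReal} :
    Filter.atTop.limsup (fun n => max (u n) (v n)) ≤
      max (Filter.atTop.limsup u) (Filter.atTop.limsup v) := by
  by_contra hcon
  push_neg at hcon
  obtain ⟨β, hβ1, hβ2⟩ := exists_between hcon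
  have hfreq : ∃ᶠ n in Filter.atTop, β < max (u n) (v n) :=
    frequently_lt_of_lt_limsup (by isBoundedDefault) hβ2
  have h2 : ∃ᶠ n in Filter.atTop, β < u n ∨ β < v n :=
    hfreq.mono (fun n hn => lt_max_iff.1 hn)
  rcases frequently_or_distrib.1 h2 with h3 | h3
  · have h4 : β ≤ Filter.atTop.limsup u :=
      le_limsup_of_frequently_le (h3.mono fun n hn => le_of_lt hn)
    exact absurd (h4.trans (le_max_left _ _)) (not_le.2 hβ1)
  · have h4 : β ≤ Filter.atTop.limsup v :=
      le_limsup_of_frequently_le (h3.mono fun n hn => le_of_lt hn)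
    exact absurd (h4.trans (le_max_right _ _)) (not_le.2 hβ1)

lemma ereal_coe_max (x y : ℝ) : ((max x y : ℝ) : EReal) = max (x : EReal) (y : EReal) :=
  (EReal.coe_strictMono.monotone.map_max)

lemma limsup_finset_sup'_le {ι : Type*} {s : Finset ι} (hs : s.Nonempty) (w : ι → ℕ → ℝ) :
    Filter.atTop.limsup (fun n => ((s.sup' hs (fun i => w i n) : ℝ) : EReal))
      ≤ s.sup' hs (fun i => Filter.atTop.limsup (fun n => ((w i n : ℝ) : EReal))) := by
  classical
  induction hs using Finset.Nonempty.cons_induction with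
  | singleton i => simp
  | cons a s ha hs ih =>
      have hcne : (Finset.cons a s ha).Nonempty := ⟨a, by simp⟩
      have key : ∀ n : ℕ, (((Finset.cons a s ha).sup' hcne (fun i => w i n) : ℝ) : EReal)
          = max ((w a n : ℝ) : EReal) ((s.sup' hs (fun i => w i n) : ℝ) : EReal) := by
        intro n
        rw [Finset.sup'_cons hs]
        exact ereal_coe_max _ _
      calc Filter.atTop.limsup (fun n => (((Finset.cons a s ha).sup' hcne (fun i => w i n) : ℝ) : EReal))
          = Filter.atTop.limsup (fun n => max ((w a n : ℝ) : EReal) ((s.sup' hs (fun i => w i n) : ℝ) : EReal)) := by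
            exact congrArg (fun u => Filter.limsup u Filter.atTop) (funext key)
        _ ≤ max (Filter.atTop.limsup (fun n => ((w a n : ℝ) : EReal)))
              (Filter.atTop.limsup (fun n => ((s.sup' hs (fun i => w i n) : ℝ) : EReal))) := limsup_max_le
        _ ≤ max (Filter.atTop.limsup (fun n => ((w a n : ℝ) : EReal)))
              (s.sup' hs (fun i => Filter.atTop.limsup (fun n => ((w i n : ℝ) : EReal)))) := by
            exact max_le_max (le_refl _) ih
        _ = (Finset.cons a s ha).sup' hcne (fun i => Filter.atTop.limsup (fun n => ((w i n : ℝ) : EReal))) := by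
            rw [Finset.sup'_cons hs]

end AuxLimsup
section AuxCond

variable {X : Type*} [TopologicalSpace X]

lemma coverNum_le_relCoverNum {T : X → X} {U W : Finset (Set X)}
    (hU : ⋃₀ (U : Set (Set X)) = Set.univ) (n : ℕ) {V : Set X}
    (hV : V ∈ dynRefine T (↑W) n) :
    coverNum (dynRefine T (↑U) n) V ≤ relCoverNum T U W n := by
  apply le_csSup
  · obtain ⟨F, hF, hFc, hcard⟩ := exists_fullCover T hU n
    refine ⟨F.card + 1, ?_⟩
    rintro k ⟨V', hV', rfl⟩
    exact coverNum_le_card' hF ((Set.subset_univ V').trans hFc)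
  · exact ⟨V, hV, rfl⟩

lemma one_le_relCoverNum {T : X → X} {U W : Finset (Set X)}
    (hU : ⋃₀ (U : Set (Set X)) = Set.univ) (hW : ⋃₀ (W : Set (Set X)) = Set.univ)
    [Nonempty X] (n : ℕ) : 1 ≤ relCoverNum T U W n := by
  obtain ⟨F, hF, hFc, -⟩ := exists_fullCover T hW n
  obtain ⟨x⟩ := ‹Nonempty X›
  obtain ⟨V, hVF, -⟩ := hFc (Set.mem_univ x)
  exact le_trans (one_le_coverNum (coversUniv_dynRefine T hU n))
    (coverNum_le_relCoverNum hU n (hF hVF))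

lemma cond_block {T : X → X} {U W : Finset (Set X)}
    (hU : ⋃₀ (U : Set (Set X)) = Set.univ) (n0 : ℕ) :
    ∀ q : ℕ, ∀ V ∈ dynRefine T (↑W) (q * n0),
      ∃ G : Finset (Set X), ↑G ⊆ dynRefine T (↑U) (q * n0) ∧ V ⊆ ⋃₀ (G : Set (Set X)) ∧
        G.card ≤ (relCoverNum T U W n0) ^ q := by
  classical
  intro q
  induction q with
  | zero =>
      intro V hV
      rw [Nat.zero_mul]
      exact ⟨{Set.univ}, by simpa using univ_mem_dynRefine_zero T (↑U : Set (Set X)),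
        by simp, by simp⟩
  | succ q ih =>
      intro V hV
      rw [Nat.succ_mul] at hV
      obtain ⟨A, hA, B, hB, rfl⟩ := dynRefine_split hV
      obtain ⟨G1, hG1, hG1c, hG1card⟩ := ih A hA
      have hR : coverNum (dynRefine T (↑U) n0) B ≤ relCoverNum T U W n0 :=
        coverNum_le_relCoverNum hU n0 hB
      obtain ⟨G2, hG2, hG2c, hG2card⟩ : ∃ G2 : Finset (Set X), ↑G2 ⊆ dynRefine T (↑U) n0 ∧
          B ⊆ ⋃₀ (G2 : Set (Set X)) ∧ G2.card ≤ relCoverNum T U W n0 := by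
        by_cases hB0 : B = ∅
        · exact ⟨∅, by simp, by simp [hB0], by simp⟩
        · obtain ⟨F, h1, h2, h3, -⟩ := exists_min_cover (coversUniv_dynRefine T hU n0) hB0
          exact ⟨F, h1, h2, by rw [h3]; exact hR⟩
      refine ⟨(G1 ×ˢ G2).image (fun p => p.1 ∩ (T^[q * n0]) ⁻¹' p.2), ?_, ?_, ?_⟩
      · intro V' hV'
        simp only [Finset.coe_image, Set.mem_image, Finset.mem_coe, Finset.mem_product] at hV'
        obtain ⟨⟨A', B'⟩, ⟨hA', hB'⟩, rfl⟩ := hV'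
        rw [Nat.succ_mul]
        exact inter_preimage_mem_dynRefine (hG1 hA') (hG2 hB')
      · rintro x ⟨hxA, hxB⟩
        obtain ⟨A', hA', hxA'⟩ := hG1c hxA
        obtain ⟨B', hB', hxB'⟩ := hG2c hxB
        refine ⟨A' ∩ (T^[q * n0]) ⁻¹' B', ?_, hxA', hxB'⟩
        simp only [Finset.coe_image, Set.mem_image, Finset.mem_coe, Finset.mem_product]
        exact ⟨(A', B'), ⟨Finset.mem_coe.1 hA', Finset.mem_coe.1 hB'⟩, rfl⟩
      · calc ((G1 ×ˢ G2).image (fun p => p.1 ∩ (T^[q * n0]) ⁻¹' p.2)).card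
            ≤ (G1 ×ˢ G2).card := Finset.card_image_le
          _ = G1.card * G2.card := Finset.card_product _ _
          _ ≤ (relCoverNum T U W n0) ^ q * relCoverNum T U W n0 :=
              Nat.mul_le_mul hG1card hG2card
          _ = (relCoverNum T U W n0) ^ (q + 1) := (pow_succ _ _).symm

lemma cond_count {T : X → X} {U W : Finset (Set X)}
    (hU : ⋃₀ (U : Set (Set X)) = Set.univ) (hW : ⋃₀ (W : Set (Set X)) = Set.univ)
    [Nonempty X] (E : Set X) (n0 q : ℕ) :
    coverNum (dynRefine T (↑U) (q * n0)) E ≤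
      coverNum (dynRefine T (↑W) (q * n0)) E * (relCoverNum T U W n0) ^ q := by
  classical
  by_cases hE : E = ∅
  · have h1 : coverNum (dynRefine T (↑U) (q * n0)) E = 1 := by simp [coverNum, hE]
    have h2 : coverNum (dynRefine T (↑W) (q * n0)) E = 1 := by simp [coverNum, hE]
    rw [h1, h2, one_mul]
    exact Nat.one_le_pow _ _ (one_le_relCoverNum hU hW n0)
  · obtain ⟨F, hF, hFc, hFcard, hF1⟩ := exists_min_cover (coversUniv_dynRefine T hW (q * n0)) hE
    choose G hG1 hG2 hG3 using
      (fun (V : {V // V ∈ F}) => cond_block hU n0 q (V : Set X) (hF V.2))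
    have hsub : ↑(F.attach.biUnion G) ⊆ dynRefine T (↑U) (q * n0) := by
      intro x hx
      rw [Finset.mem_coe, Finset.mem_biUnion] at hx
      obtain ⟨V, -, hxV⟩ := hx
      exact hG1 V (Finset.mem_coe.2 hxV)
    have hcov : E ⊆ ⋃₀ ((F.attach.biUnion G : Finset (Set X)) : Set (Set X)) := by
      intro x hx
      obtain ⟨V, hVF, hxV⟩ := hFc hx
      obtain ⟨g, hg, hxg⟩ := hG2 ⟨V, hVF⟩ hxV
      refine ⟨g, ?_, hxg⟩
      rw [Finset.mem_coe, Finset.mem_biUnion]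
      exact ⟨⟨V, hVF⟩, Finset.mem_attach _ _, Finset.mem_coe.1 hg⟩
    have hcard : (F.attach.biUnion G).card ≤ F.card * (relCoverNum T U W n0) ^ q := by
      refine Finset.card_biUnion_le.trans ?_
      refine le_trans (Finset.sum_le_card_nsmul _ _ _ (fun V _ => hG3 V)) ?_
      rw [Finset.card_attach, smul_eq_mul]
    have h1 : 1 ≤ (F.attach.biUnion G).card := by
      obtain ⟨x, hx⟩ := Set.nonempty_iff_ne_empty.2 hE
      obtain ⟨g, hg, -⟩ := hcov hx
      exact Finset.card_pos.2 ⟨g, Finset.mem_coe.1 hg⟩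
    calc coverNum (dynRefine T (↑U) (q * n0)) E ≤ (F.attach.biUnion G).card :=
          coverNum_le_card hsub hcov h1
      _ ≤ F.card * (relCoverNum T U W n0) ^ q := hcard
      _ = coverNum (dynRefine T (↑W) (q * n0)) E * (relCoverNum T U W n0) ^ q := by rw [hFcard]

end AuxCond
section AuxCondLimsup
open Filter

variable {X : Type*} [TopologicalSpace X]

lemma coverEntropyOf_le_limsupW {T : X → X} {U W : Finset (Set X)}
    (hU : ⋃₀ (U : Set (Set X)) = Set.univ) (hW : ⋃₀ (W : Set (Set X)) = Set.univ)
    [Nonempty X] (E : Set X) {n0 : ℕ} (hn0 : 1 ≤ n0) :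
    coverEntropyOf T U E ≤
      Filter.atTop.limsup
        (fun n => ((Real.log (coverNum (dynRefine T (↑W) n) E) / n : ℝ) : EReal))
      + ((Real.log (relCoverNum T U W n0) / n0 : ℝ) : EReal) := by
  classical
  set LW : EReal := Filter.atTop.limsup
      (fun n => ((Real.log (coverNum (dynRefine T (↑W) n) E) / n : ℝ) : EReal)) with hLWdef
  set R : ℕ := relCoverNum T U W n0 with hRdef
  set ρ : ℝ := Real.log R / n0 with hρdef
  have hRpos : 1 ≤ R := one_le_relCoverNum hU hW n0
  have hlogR : 0 ≤ Real.log R := lognat_nonneg R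
  have hn0R : (0 : ℝ) < (n0 : ℝ) := by exact_mod_cast hn0
  by_cases hLWtop : LW = ⊤
  · rw [hLWtop]
    rw [EReal.top_add_coe]
    exact le_top
  have hLWnonneg : (0 : EReal) ≤ LW :=
    limsup_coe_nonneg (fun n => div_nonneg (lognat_nonneg _) (by positivity))
  have hLWbot : LW ≠ ⊥ := fun hbot => by rw [hbot] at hLWnonneg; simp at hLWnonneg
  set L : ℝ := LW.toReal with hLdef
  have hLW : LW = (L : EReal) := (EReal.coe_toReal hLWtop hLWbot).symm
  have hL0 : 0 ≤ L := by
    rw [hLW] at hLWnonneg; exact_mod_cast hLWnonneg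
  rw [hLW, ← EReal.coe_add]
  apply EReal_le_coe_of_forall_add
  intro η hη
  -- eventually the W-counting is below L + η/2
  have hlt : LW < ((L + η / 2 : ℝ) : EReal) := by
    rw [hLW]
    exact_mod_cast (by linarith : L < L + η / 2)
  have hev := eventually_lt_of_limsup_lt hlt
  obtain ⟨N1, hN1⟩ := Filter.eventually_atTop.1 hev
  set C : ℝ := (n0 : ℝ) * (L + η / 2) + Real.log R with hCdef
  have hC0 : 0 ≤ C := by
    rw [hCdef]
    have h' : (0:ℝ) ≤ (n0 : ℝ) * (L + η / 2) := by positivity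
    linarith
  set N2 : ℕ := ⌈2 * C / η⌉₊ + 1 with hN2def
  show coverEntropyOf T U E ≤ _
  unfold coverEntropyOf
  apply limsup_coe_le_of_eventually
  rw [Filter.eventually_atTop]
  refine ⟨max (max N1 N2) 1, fun n hn => ?_⟩
  have hnN1 : N1 ≤ n := le_trans (le_trans (le_max_left _ _) (le_max_left _ _)) hn
  have hnN2 : N2 ≤ n := le_trans (le_trans (le_max_right _ _) (le_max_left _ _)) hn
  have hn1 : 1 ≤ n := le_trans (le_max_right _ _) hn
  have hnR : (0 : ℝ) < (n : ℝ) := by exact_mod_cast hn1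
  set q : ℕ := n / n0 + 1 with hqdef
  have hqn : n ≤ q * n0 := by
    have e := Nat.div_add_mod n n0
    have hm : n % n0 < n0 := Nat.mod_lt _ (by omega)
    calc n = n0 * (n / n0) + n % n0 := e.symm
      _ ≤ n0 * (n / n0) + n0 := by omega
      _ = q * n0 := by rw [hqdef]; ring
  have hqn' : q * n0 ≤ n + n0 := by
    have : (n / n0) * n0 ≤ n := Nat.div_mul_le_self n n0
    calc q * n0 = (n / n0) * n0 + n0 := by rw [hqdef]; ring
      _ ≤ n + n0 := by omega
  have hqr : (q : ℝ) ≤ (n : ℝ) / (n0 : ℝ) + 1 := by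
    rw [hqdef]
    push_cast
    have := Nat.cast_div_le (α := ℝ) (m := n) (n := n0)
    linarith
  -- counting chain
  set Cn : ℕ := coverNum (dynRefine T (↑U) n) E with hCndef
  have hCn1 : 1 ≤ Cn := one_le_coverNum (coversUniv_dynRefine T hU n)
  set CW : ℕ := coverNum (dynRefine T (↑W) (q * n0)) E with hCWdef
  have hCW1 : 1 ≤ CW := one_le_coverNum (coversUniv_dynRefine T hW _)
  have hchain : Cn ≤ CW * R ^ q := by
    calc Cn ≤ coverNum (dynRefine T (↑U) (q * n0)) E := coverNum_dynRefine_mono_n hU hqn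
      _ ≤ CW * R ^ q := cond_count hU hW E n0 q
  -- real log bounds
  have hCWr : Real.log CW ≤ (q * n0 : ℕ) * (L + η / 2) := by
    have h1 := hN1 (q * n0) (le_trans hnN1 hqn)
    rw [EReal.coe_lt_coe_iff] at h1
    have hqn0pos : (0 : ℝ) < ((q * n0 : ℕ) : ℝ) := by
      have : 1 ≤ q * n0 := le_trans hn1 hqn
      exact_mod_cast this
    rw [div_lt_iff₀ hqn0pos] at h1
    exact le_of_lt (by rw [hCWdef]; linarith [h1])
  have hlogCn : Real.log Cn ≤ ((q * n0 : ℕ) : ℝ) * (L + η / 2) + (q : ℝ) * Real.log R := by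
    have hcast : (Cn : ℝ) ≤ (CW : ℝ) * (R : ℝ) ^ q := by
      have := hchain
      push_cast
      exact_mod_cast this
    have hCnpos : (0 : ℝ) < (Cn : ℝ) := by exact_mod_cast hCn1
    have hCWpos : (0 : ℝ) < (CW : ℝ) := by exact_mod_cast hCW1
    have hRpow : (0 : ℝ) < (R : ℝ) ^ q := by positivity
    calc Real.log Cn ≤ Real.log ((CW : ℝ) * (R : ℝ) ^ q) :=
          Real.log_le_log hCnpos hcast
      _ = Real.log CW + Real.log ((R : ℝ) ^ q) := Real.log_mul (ne_of_gt hCWpos) (ne_of_gt hRpow)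
      _ = Real.log CW + (q : ℝ) * Real.log R := by rw [Real.log_pow]
      _ ≤ ((q * n0 : ℕ) : ℝ) * (L + η / 2) + (q : ℝ) * Real.log R := by linarith [hCWr]
  -- tail bound
  have htail : (n0 : ℝ) * (L + η / 2) + Real.log R ≤ (n : ℝ) * η / 2 := by
    have h1 : (2 * C / η : ℝ) ≤ (n : ℝ) := by
      have h2 : ((⌈2 * C / η⌉₊ : ℕ) : ℝ) ≤ (n : ℝ) := by
        have : (⌈2 * C / η⌉₊ : ℕ) ≤ n := by omega
        exact_mod_cast this
      exact le_trans (Nat.le_ceil _) h2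
    have h3 : 2 * C ≤ (n : ℝ) * η := by
      rw [div_le_iff₀ hη] at h1
      linarith
    rw [hCdef] at h3
    linarith
  -- put everything together
  rw [div_le_iff₀ hnR]
  have hB1 : ((q * n0 : ℕ) : ℝ) * (L + η / 2) ≤ ((n : ℝ) + (n0 : ℝ)) * (L + η / 2) := by
    apply mul_le_mul_of_nonneg_right _ (by linarith)
    exact_mod_cast hqn'
  have hB2 : (q : ℝ) * Real.log R ≤ ((n : ℝ) / (n0 : ℝ) + 1) * Real.log R :=
    mul_le_mul_of_nonneg_right hqr hlogR
  have hexpand : (n : ℝ) * (L + ρ + η) =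
      ((n : ℝ) + (n0 : ℝ)) * (L + η / 2) + ((n : ℝ) / (n0 : ℝ) + 1) * Real.log R
        + ((n : ℝ) * η / 2 - (n0 : ℝ) * (L + η / 2) - Real.log R) := by
    rw [hρdef]
    field_simp
    ring
  linarith [hlogCn, hB1, hB2, htail, hexpand]
end AuxCondLimsup
section AuxEntropy
open Filter

variable {X : Type*} [TopologicalSpace X]

lemma isFinOpenCover_univ : IsFinOpenCover ({Set.univ} : Finset (Set X)) :=
  ⟨by simp, by simp⟩

lemma limsupW_eq (T : X → X) (W : Finset (Set X)) (E : Set X) :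
    Filter.atTop.limsup
      (fun n => ((Real.log (coverNum (dynRefine T (↑W) n) E) / n : ℝ) : EReal))
      = coverEntropyOf T W E := rfl

lemma coverEntropyOf_le_coverEntropy {T : X → X} {U : Finset (Set X)}
    (hU : IsFinOpenCover U) (E : Set X) :
    coverEntropyOf T U E ≤ coverEntropy T E :=
  le_iSup₂ (f := fun (U : Finset (Set X)) (_ : IsFinOpenCover U) => coverEntropyOf T U E) U hU

lemma log_div_cast_mono {a b : ℕ} (h1 : 1 ≤ a) (hab : a ≤ b) (n : ℕ) :
    Real.log a / n ≤ Real.log b / n := by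
  rcases Nat.eq_zero_or_pos n with hn | hn
  · simp [hn]
  · have hlog : Real.log a ≤ Real.log b :=
      Real.log_le_log (by exact_mod_cast h1) (by exact_mod_cast hab)
    have hnpos : (0:ℝ) < n := by exact_mod_cast hn
    gcongr

lemma coverEntropyOf_mono {T : X → X} {U : Finset (Set X)} (hU : ⋃₀ (U : Set (Set X)) = Set.univ)
    {A B : Set X} (hAB : A ⊆ B) : coverEntropyOf T U A ≤ coverEntropyOf T U B := by
  unfold coverEntropyOf
  refine limsup_le_limsup (Filter.Eventually.of_forall fun n => ?_)
  apply EReal.coe_le_coe_iff.2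
  exact log_div_cast_mono (one_le_coverNum (coversUniv_dynRefine T hU n))
    (coverNum_mono_set (coversUniv_dynRefine T hU n) hAB) n

lemma coverEntropy_mono {T : X → X} {A B : Set X} (hAB : A ⊆ B) :
    coverEntropy T A ≤ coverEntropy T B := by
  refine iSup_le fun U => iSup_le fun hU => ?_
  exact le_trans (coverEntropyOf_mono hU.2 hAB) (coverEntropyOf_le_coverEntropy hU B)

lemma coverEntropyOf_zero_of_count_one {T : X → X} {U : Finset (Set X)} {E : Set X}
    (h : ∀ n : ℕ, coverNum (dynRefine T (↑U) n) E = 1) :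
    coverEntropyOf T U E = 0 := by
  unfold coverEntropyOf
  have h0 : (fun n : ℕ => ((Real.log (coverNum (dynRefine T (↑U) n) E) / n : ℝ) : EReal))
      = fun _ => (0 : EReal) := by
    funext n; rw [h n]; simp
  rw [h0, limsup_const]

lemma coverEntropy_empty_le (T : X → X) : coverEntropy T (∅ : Set X) ≤ 0 := by
  refine iSup_le fun U => iSup_le fun hU => ?_
  exact le_of_eq (coverEntropyOf_zero_of_count_one (fun n => by simp [coverNum]))

lemma coverEntropy_singleton (T : X → X) (x : X) : coverEntropy T ({x} : Set X) = 0 := by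
  have hcount : ∀ (U : Finset (Set X)), IsFinOpenCover U →
      ∀ n : ℕ, coverNum (dynRefine T (↑U) n) ({x} : Set X) = 1 := by
    intro U hU n
    refine le_antisymm ?_ (one_le_coverNum (coversUniv_dynRefine T hU.2 n))
    obtain ⟨F, hF, hFc, -⟩ := exists_fullCover T hU.2 n
    obtain ⟨V, hV, hxV⟩ := hFc (Set.mem_univ x)
    exact coverNum_le_one_of_subset_cell (hF hV) (by simpa using hxV)
  apply le_antisymm
  · refine iSup_le fun U => iSup_le fun hU => ?_
    exact le_of_eq (coverEntropyOf_zero_of_count_one (hcount U hU))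
  · rw [← coverEntropyOf_zero_of_count_one (hcount _ isFinOpenCover_univ)]
    exact coverEntropyOf_le_coverEntropy isFinOpenCover_univ _

lemma eventually_const_div_le {c η : ℝ} (hη : 0 < η) :
    ∀ᶠ n : ℕ in Filter.atTop, c / n ≤ η := by
  rw [Filter.eventually_atTop]
  refine ⟨⌈c / η⌉₊ + 1, fun n hn => ?_⟩
  have hnpos : (0:ℝ) < n := by
    have : 1 ≤ n := by omega
    exact_mod_cast this
  rw [div_le_iff₀ hnpos]
  have h1 : c / η ≤ (n : ℝ) := by
    calc c / η ≤ (⌈c / η⌉₊ : ℝ) := Nat.le_ceil _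
      _ ≤ (n : ℝ) := by exact_mod_cast (by omega : ⌈c / η⌉₊ ≤ n)
  calc c = (c / η) * η := by field_simp
    _ ≤ (n : ℝ) * η := mul_le_mul_of_nonneg_right h1 (le_of_lt hη)
    _ = η * n := by ring

lemma eventually_log_mul_le {c η : ℝ} (hc : 1 ≤ c) (hη : 0 < η) :
    ∀ᶠ n : ℕ in Filter.atTop, Real.log (c * (n + 1)) / n ≤ η := by
  have hlit := Real.isLittleO_log_id_atTop
  rw [Asymptotics.isLittleO_iff] at hlit
  have h2 := hlit (show (0:ℝ) < η / (4 * c) by positivity)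
  rw [Filter.eventually_atTop] at h2
  obtain ⟨x0, hx0⟩ := h2
  rw [Filter.eventually_atTop]
  refine ⟨max ⌈x0⌉₊ 1 + 1, fun n hn => ?_⟩
  have hn1 : 1 ≤ n := by omega
  have hnpos : (0:ℝ) < n := by exact_mod_cast hn1
  have hnx0 : x0 ≤ c * (n + 1) := by
    have h3 : x0 ≤ (⌈x0⌉₊ : ℝ) := Nat.le_ceil _
    have h4 : ((⌈x0⌉₊ : ℕ) : ℝ) ≤ (n : ℝ) := by exact_mod_cast (by omega : ⌈x0⌉₊ ≤ n)
    nlinarith [hnpos]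
  have h5 := hx0 (c * (n + 1)) hnx0
  rw [Real.norm_eq_abs, Real.norm_eq_abs] at h5
  have h6 : Real.log (c * (n + 1)) ≤ η / (4 * c) * (c * (n + 1)) := by
    have habs : |c * (n+1)| = c * (n+1) := abs_of_pos (by nlinarith)
    calc Real.log (c * (n + 1)) ≤ |Real.log (c * (n + 1))| := le_abs_self _
      _ ≤ η / (4 * c) * |c * (n + 1)| := h5
      _ = η / (4 * c) * (c * (n + 1)) := by rw [habs]
  have h7 : η / (4 * c) * (c * (n + 1)) = η * (n + 1) / 4 := by
    field_simp
  rw [div_le_iff₀ hnpos]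
  have hn1' : (1:ℝ) ≤ (n:ℝ) := by exact_mod_cast hn1
  have h8 : (n : ℝ) + 1 ≤ 2 * n := by linarith
  nlinarith [h6, h7, hη, hnpos]

lemma limsup_coe_vanishing_eq_zero {v : ℕ → ℝ} (hv0 : ∀ n, 0 ≤ v n)
    (hvlim : ∀ η : ℝ, 0 < η → ∀ᶠ n in Filter.atTop, v n ≤ η) :
    Filter.atTop.limsup (fun n => ((v n : ℝ) : EReal)) = 0 := by
  apply le_antisymm
  · have h0 : ((0:ℝ) : EReal) = (0 : EReal) := rfl
    rw [← h0]
    apply EReal_le_coe_of_forall_add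
    intro η hη
    rw [zero_add]
    exact limsup_coe_le_of_eventually (hvlim η hη)
  · exact limsup_coe_nonneg hv0

lemma limsup_coe_add_vanishing_le {u v : ℕ → ℝ} (hv0 : ∀ n, 0 ≤ v n)
    (hvlim : ∀ η : ℝ, 0 < η → ∀ᶠ n in Filter.atTop, v n ≤ η) :
    Filter.atTop.limsup (fun n => ((v n + u n : ℝ) : EReal))
      ≤ Filter.atTop.limsup (fun n => ((u n : ℝ) : EReal)) := by
  have hveq := limsup_coe_vanishing_eq_zero hv0 hvlim
  have hsplit : (fun n => ((v n + u n : ℝ) : EReal))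
      = (fun n => ((v n : ℝ) : EReal)) + (fun n => ((u n : ℝ) : EReal)) := by
    funext n; exact EReal.coe_add _ _
  rw [hsplit]
  have h := EReal.limsup_add_le (f := Filter.atTop)
    (u := fun n => ((v n : ℝ) : EReal)) (v := fun n => ((u n : ℝ) : EReal))
    (by left; rw [hveq]; simp) (by left; rw [hveq]; simp)
  rw [hveq, zero_add] at h
  exact h

end AuxEntropy
section AuxEntropy2
open Filter

variable {X : Type*} [TopologicalSpace X]

lemma coverEntropyOf_le_finset_sup' {T : X → X} {U : Finset (Set X)}
    (hU : ⋃₀ (U : Set (Set X)) = Set.univ) {ι : Type*} {s : Finset ι} (hs : s.Nonempty)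
    (f : ι → Set X) {E : Set X} (hcov : E ⊆ ⋃ i ∈ s, f i) :
    coverEntropyOf T U E ≤ s.sup' hs (fun i => coverEntropyOf T U (f i)) := by
  classical
  have hpt : ∀ n : ℕ, Real.log (coverNum (dynRefine T (↑U) n) E) / n ≤
      Real.log ((s.card + 1 : ℕ)) / n
        + s.sup' hs (fun i => Real.log (coverNum (dynRefine T (↑U) n) (f i)) / n) := by
    intro n
    have hV : CoversUniv (dynRefine T (↑U) n) := coversUniv_dynRefine T hU n
    obtain ⟨i0, hi0, hMi⟩ :=
      Finset.exists_mem_eq_sup' hs (fun i => coverNum (dynRefine T (↑U) n) (f i))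
    set M : ℕ := s.sup' hs (fun i => coverNum (dynRefine T (↑U) n) (f i)) with hMdef
    have hM1 : 1 ≤ M := by
      obtain ⟨i, hi⟩ := hs
      exact le_trans (one_le_coverNum hV)
        (Finset.le_sup' (f := fun i => coverNum (dynRefine T (↑U) n) (f i)) hi)
    have hsum : coverNum (dynRefine T (↑U) n) E ≤ (s.card + 1) * M := by
      have hcm : ∀ i ∈ s, coverNum (dynRefine T (↑U) n) (f i) ≤ M :=
        fun i hi => Finset.le_sup' (f := fun i => coverNum (dynRefine T (↑U) n) (f i)) hi
      have hsumM := Finset.sum_le_card_nsmul s (fun i => coverNum (dynRefine T (↑U) n) (f i)) M hcm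
      rw [smul_eq_mul] at hsumM
      have hexp : (s.card + 1) * M = s.card * M + M := by ring
      calc coverNum (dynRefine T (↑U) n) E
          ≤ coverNum (dynRefine T (↑U) n) (⋃ i ∈ s, f i) := coverNum_mono_set hV hcov
        _ ≤ (∑ i ∈ s, coverNum (dynRefine T (↑U) n) (f i)) + 1 := coverNum_biUnion_le hV s f
        _ ≤ s.card * M + 1 := by omega
        _ ≤ (s.card + 1) * M := by omega
    have hle1 : Real.log (coverNum (dynRefine T (↑U) n) E) / n
        ≤ Real.log (((s.card + 1) * M : ℕ)) / n :=
      log_div_cast_mono (one_le_coverNum hV) hsum n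
    have hMpos : (0:ℝ) < (M:ℝ) := by exact_mod_cast hM1
    have hsplit : Real.log ((((s.card + 1) * M : ℕ)) : ℝ)
        = Real.log (((s.card + 1 : ℕ)) : ℝ) + Real.log ((M : ℕ) : ℝ) := by
      push_cast
      rw [Real.log_mul (by positivity) (ne_of_gt hMpos)]
    have hMle : Real.log ((M : ℕ) : ℝ) / n
        ≤ s.sup' hs (fun i => Real.log (coverNum (dynRefine T (↑U) n) (f i)) / n) := by
      have he : Real.log ((M : ℕ) : ℝ) / n
          = Real.log (coverNum (dynRefine T (↑U) n) (f i0)) / n := by rw [hMi]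
      rw [he]
      exact Finset.le_sup'
        (f := fun i => Real.log (coverNum (dynRefine T (↑U) n) (f i)) / n) hi0
    have heq2 : Real.log ((((s.card + 1) * M : ℕ)) : ℝ) / n
        = Real.log (((s.card + 1 : ℕ)) : ℝ) / n + Real.log ((M : ℕ) : ℝ) / n := by
      rw [hsplit]; ring
    calc Real.log (coverNum (dynRefine T (↑U) n) E) / n
        ≤ Real.log (((s.card + 1) * M : ℕ)) / n := hle1
      _ = Real.log (((s.card + 1 : ℕ)) : ℝ) / n + Real.log ((M : ℕ) : ℝ) / n := heq2
      _ ≤ _ := by linarith [hMle]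
  show Filter.atTop.limsup _ ≤ _
  calc Filter.atTop.limsup
        (fun n => ((Real.log (coverNum (dynRefine T (↑U) n) E) / n : ℝ) : EReal))
      ≤ Filter.atTop.limsup (fun n => ((Real.log ((s.card + 1 : ℕ)) / n
          + s.sup' hs (fun i => Real.log (coverNum (dynRefine T (↑U) n) (f i)) / n) : ℝ) : EReal)) :=
        limsup_le_limsup (Filter.Eventually.of_forall fun n => EReal.coe_le_coe_iff.2 (hpt n))
    _ ≤ Filter.atTop.limsup (fun n =>
          ((s.sup' hs (fun i => Real.log (coverNum (dynRefine T (↑U) n) (f i)) / n) : ℝ) : EReal)) := by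
        apply limsup_coe_add_vanishing_le
        · intro n; exact div_nonneg (lognat_nonneg _) (by positivity)
        · intro η hη; exact eventually_const_div_le hη
    _ ≤ s.sup' hs (fun i => Filter.atTop.limsup
          (fun n => ((Real.log (coverNum (dynRefine T (↑U) n) (f i)) / n : ℝ) : EReal))) :=
        limsup_finset_sup'_le hs _
    _ = s.sup' hs (fun i => coverEntropyOf T U (f i)) := rfl

lemma coverEntropy_le_finset_sup' {T : X → X} {ι : Type*} {s : Finset ι} (hs : s.Nonempty)
    (f : ι → Set X) {E : Set X} (hcov : E ⊆ ⋃ i ∈ s, f i) :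
    coverEntropy T E ≤ s.sup' hs (fun i => coverEntropy T (f i)) := by
  refine iSup_le fun U => iSup_le fun hU => ?_
  refine le_trans (coverEntropyOf_le_finset_sup' hU.2 hs f hcov) ?_
  exact Finset.sup'_le hs _
    (fun i hi => le_trans (coverEntropyOf_le_coverEntropy hU _) (Finset.le_sup' (f := fun i => coverEntropy T (f i)) hi))

lemma exists_piece_entropy_eq {T : X → X} {ι : Type*} {s : Finset ι} (hs : s.Nonempty)
    (f : ι → Set X) {E : Set X} (hcov : E ⊆ ⋃ i ∈ s, f i) (hsub : ∀ i ∈ s, f i ⊆ E) :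
    ∃ i ∈ s, coverEntropy T (f i) = coverEntropy T E := by
  obtain ⟨i0, hi0, heq⟩ := Finset.exists_mem_eq_sup' hs (fun i => coverEntropy T (f i))
  refine ⟨i0, hi0, le_antisymm (coverEntropy_mono (hsub i0 hi0)) ?_⟩
  calc coverEntropy T E ≤ s.sup' hs (fun i => coverEntropy T (f i)) :=
        coverEntropy_le_finset_sup' hs f hcov
    _ = coverEntropy T (f i0) := heq

lemma coverEntropy_le_W_add {T : X → X} {W : Finset (Set X)} (hW : IsFinOpenCover W)
    [Nonempty X] {ceps : ℝ}
    (hWgood : ∀ U : Finset (Set X), IsFinOpenCover U →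
      ∃ n0 : ℕ, 1 ≤ n0 ∧ Real.log (relCoverNum T U W n0) / n0 ≤ ceps)
    (E : Set X) :
    coverEntropy T E ≤ coverEntropyOf T W E + (ceps : EReal) := by
  refine iSup_le fun U => iSup_le fun hU => ?_
  obtain ⟨n0, hn01, hn0le⟩ := hWgood U hU
  refine le_trans (coverEntropyOf_le_limsupW hU.2 hW.2 E hn01) ?_
  rw [limsupW_eq]
  exact add_le_add_right (EReal.coe_le_coe_iff.2 hn0le) _

lemma condTopEntropy_nonneg (T : X → X) : (0 : EReal) ≤ condTopEntropy T := by
  refine le_iInf fun U2 => le_iInf fun hU2 => ?_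
  refine le_trans ?_ (le_iSup₂ (f := fun (U1 : Finset (Set X)) (_ : IsFinOpenCover U1) =>
    (((⨅ n : ℕ, Real.log (relCoverNum T U1 U2 (n + 1)) / (n + 1) : ℝ)) : EReal))
    ({Set.univ} : Finset (Set X)) isFinOpenCover_univ)
  have h0 : (0:ℝ) ≤ ⨅ n : ℕ, Real.log (relCoverNum T ({Set.univ} : Finset (Set X)) U2 (n + 1)) / (n + 1) :=
    Real.iInf_nonneg (fun n => div_nonneg (lognat_nonneg _) (by positivity))
  exact_mod_cast h0

lemma exists_good_W {T : X → X} {c : ℝ} (hc : condTopEntropy T = (c : EReal))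
    {ε : ℝ} (hε : 0 < ε) :
    ∃ W : Finset (Set X), IsFinOpenCover W ∧
      ∀ U : Finset (Set X), IsFinOpenCover U →
        ∃ n0 : ℕ, 1 ≤ n0 ∧ Real.log (relCoverNum T U W n0) / n0 ≤ c + ε := by
  have h1 : condTopEntropy T < ((c + ε : ℝ) : EReal) := by
    rw [hc]; exact_mod_cast (by linarith : c < c + ε)
  unfold condTopEntropy at h1
  rw [iInf_lt_iff] at h1
  obtain ⟨W, h2⟩ := h1
  rw [iInf_lt_iff] at h2
  obtain ⟨hW, hWlt⟩ := h2
  refine ⟨W, hW, fun U hU => ?_⟩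
  have h3 : (((⨅ n : ℕ, Real.log (relCoverNum T U W (n + 1)) / (n + 1) : ℝ)) : EReal)
      < ((c + ε : ℝ) : EReal) :=
    lt_of_le_of_lt (le_iSup₂ (f := fun (U1 : Finset (Set X)) (_ : IsFinOpenCover U1) =>
      (((⨅ n : ℕ, Real.log (relCoverNum T U1 W (n + 1)) / (n + 1) : ℝ)) : EReal)) U hU) hWlt
  rw [EReal.coe_lt_coe_iff] at h3
  obtain ⟨n, hn⟩ := exists_lt_of_ciInf_lt h3
  refine ⟨n + 1, by omega, ?_⟩
  have : Real.log (relCoverNum T U W (n + 1)) / ((n : ℝ) + 1) ≤ c + ε := le_of_lt hn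
  calc Real.log (relCoverNum T U W (n + 1)) / ((n + 1 : ℕ) : ℝ)
      = Real.log (relCoverNum T U W (n + 1)) / ((n : ℝ) + 1) := by push_cast; ring_nf
    _ ≤ c + ε := this

end AuxEntropy2
section AuxMetric

variable {X : Type*} [MetricSpace X]

/-- `(m, lam)`-separated finite sets. -/
def IsDynSep (T : X → X) (m : ℕ) (lam : ℝ) (Q : Finset X) : Prop :=
  ∀ p ∈ Q, ∀ q ∈ Q, p ≠ q → ∃ i < m, lam < dist (T^[i] p) (T^[i] q)

lemma cell_small_inj {T : X → X} {Wst : Finset (Set X)} {lam : ℝ} (hlam : 0 < lam)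
    (hWb : ∀ w ∈ Wst, ∃ z : X, w = Metric.ball z (lam / 20))
    {m : ℕ} {V : Set X} (hV : V ∈ dynRefine T (↑Wst) m)
    {Q : Finset X} (hQ : IsDynSep T m lam Q) {p q : X} (hp : p ∈ Q) (hq : q ∈ Q)
    (hpV : p ∈ V) (hqV : q ∈ V) : p = q := by
  by_contra hne
  obtain ⟨i, him, hd⟩ := hQ p hp q hq hne
  obtain ⟨f, hf, rfl⟩ := hV
  simp only [Set.mem_iInter, Finset.mem_range, Set.mem_preimage] at hpV hqV
  have hpi : T^[i] p ∈ f i := hpV i him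
  have hqi : T^[i] q ∈ f i := hqV i him
  obtain ⟨z, hz⟩ := hWb (f i) (hf i him)
  rw [hz, Metric.mem_ball] at hpi hqi
  have htri : dist (T^[i] p) (T^[i] q) ≤ dist (T^[i] p) z + dist z (T^[i] q) :=
    dist_triangle _ _ _
  rw [dist_comm z (T^[i] q)] at htri
  linarith

lemma isDynSep_card_le {T : X → X} {Wst : Finset (Set X)} {lam : ℝ} (hlam : 0 < lam)
    (hWstU : ⋃₀ (↑Wst : Set (Set X)) = Set.univ)
    (hWb : ∀ w ∈ Wst, ∃ z : X, w = Metric.ball z (lam / 20))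
    {m : ℕ} {Q : Finset X} (hQ : IsDynSep T m lam Q) :
    Q.card ≤ Wst.card ^ m + 1 := by
  classical
  obtain ⟨F, hF, hFc, hcard⟩ := exists_fullCover T hWstU m
  set g : X → Set X := fun p => if h : ∃ V ∈ F, p ∈ V then h.choose else ∅ with hgdef
  have hg : ∀ p : X, g p ∈ F ∧ p ∈ g p := by
    intro p
    obtain ⟨V, hV, hpV⟩ := hFc (Set.mem_univ p)
    have hex : ∃ V ∈ F, p ∈ V := ⟨V, Finset.mem_coe.1 hV, hpV⟩
    rw [hgdef]
    simp only [hex, dif_pos]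
    exact hex.choose_spec
  have hinj : Set.InjOn g ↑Q := by
    intro p hp q hq hgpq
    have h1 := (hg p).2
    have h2 := (hg q).2
    rw [hgpq] at h1
    exact cell_small_inj hlam hWb (hF (Finset.mem_coe.2 (hg q).1)) hQ
      (Finset.mem_coe.1 hp) (Finset.mem_coe.1 hq) h1 h2
  have h3 : Q.card ≤ F.card :=
    Finset.card_le_card_of_injOn g (fun p hp => (hg p).1) hinj
  omega

lemma exists_sep_ge_coverNum {T : X → X} {W Wst : Finset (Set X)} {lam : ℝ} (hlam : 0 < lam)
    (hWstU : ⋃₀ (↑Wst : Set (Set X)) = Set.univ)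
    (hWb : ∀ w ∈ Wst, ∃ z : X, w = Metric.ball z (lam / 20))
    (hLeb : ∀ x : X, ∃ w ∈ W, Metric.closedBall x lam ⊆ w)
    {E : Set X} (hE : E.Nonempty) (m : ℕ) :
    ∃ Q : Finset X, ↑Q ⊆ E ∧ IsDynSep T m lam Q ∧
      coverNum (dynRefine T (↑W) m) E ≤ Q.card := by
  classical
  set 𝒮 : Set ℕ := {k | ∃ Q : Finset X, ↑Q ⊆ E ∧ IsDynSep T m lam Q ∧ Q.card = k} with h𝒮
  have h0 : 0 ∈ 𝒮 := ⟨∅, by simp, by intro p hp; simp at hp, rfl⟩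
  have hbdd : BddAbove 𝒮 := by
    refine ⟨Wst.card ^ m + 1, ?_⟩
    rintro k ⟨Q, hQE, hQs, rfl⟩
    exact isDynSep_card_le hlam hWstU hWb hQs
  obtain ⟨Q, hQE, hQs, hQcard⟩ := Nat.sSup_mem ⟨0, h0⟩ hbdd
  refine ⟨Q, hQE, hQs, ?_⟩
  have hspan : ∀ x ∈ E, ∃ p ∈ Q, ∀ i < m, dist (T^[i] p) (T^[i] x) ≤ lam := by
    by_contra hcon
    push_neg at hcon
    obtain ⟨x, hxE, hx⟩ := hcon
    have hxQ : x ∉ Q := by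
      intro hxQ
      obtain ⟨i, him, hd⟩ := hx x hxQ
      simp at hd
      linarith
    have hQ's : IsDynSep T m lam (insert x Q) := by
      intro p hp q hq hne
      rcases Finset.mem_insert.1 hp with rfl | hp' <;> rcases Finset.mem_insert.1 hq with h | hq'
      · exact absurd h.symm hne
      · obtain ⟨i, him, hd⟩ := hx q hq'
        exact ⟨i, him, by rwa [dist_comm] at hd⟩
      · subst h
        obtain ⟨i, him, hd⟩ := hx p hp'
        exact ⟨i, him, hd⟩
      · exact hQs p hp' q hq' hne
    have hmem : (insert x Q).card ∈ 𝒮 := by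
      refine ⟨insert x Q, ?_, hQ's, rfl⟩
      rw [Finset.coe_insert]
      exact Set.insert_subset hxE hQE
    have hle := le_csSup hbdd hmem
    rw [Finset.card_insert_of_notMem hxQ] at hle
    omega
  have hch : ∀ (p : X) (i : ℕ), ∃ w ∈ W, Metric.closedBall (T^[i] p) lam ⊆ w :=
    fun p i => hLeb _
  choose w hw1 hw2 using hch
  have hQne : Q.Nonempty := by
    obtain ⟨x, hxE⟩ := hE
    obtain ⟨p, hpQ, -⟩ := hspan x hxE
    exact ⟨p, hpQ⟩
  refine le_trans (coverNum_le_card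
    (F := Q.image (fun p => ⋂ i ∈ Finset.range m, T^[i] ⁻¹' w p i)) ?_ ?_ ?_)
    (Finset.card_image_le)
  · intro V hV
    simp only [Finset.coe_image, Set.mem_image, Finset.mem_coe] at hV
    obtain ⟨p, -, rfl⟩ := hV
    exact ⟨w p, fun i _ => Finset.mem_coe.2 (hw1 p i), rfl⟩
  · intro x hx
    obtain ⟨p, hpQ, hpx⟩ := hspan x hx
    refine ⟨⋂ i ∈ Finset.range m, T^[i] ⁻¹' w p i, ?_, ?_⟩
    · simp only [Finset.coe_image, Set.mem_image, Finset.mem_coe]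
      exact ⟨p, hpQ, rfl⟩
    · simp only [Set.mem_iInter, Finset.mem_range, Set.mem_preimage]
      intro i him
      exact hw2 p i (by rw [Metric.mem_closedBall, dist_comm]; exact hpx i him)
  · exact Finset.card_pos.2 (hQne.image _)

lemma exists_lebesgue_closedBall {W : Finset (Set X)} [CompactSpace X]
    (hW : IsFinOpenCover W) :
    ∃ lam : ℝ, 0 < lam ∧ ∀ x : X, ∃ w ∈ W, Metric.closedBall x lam ⊆ w := by
  have hcov : (Set.univ : Set X) ⊆ ⋃ w : {w // w ∈ (W : Set (Set X))}, (w : Set X) := by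
    rw [← Set.sUnion_eq_iUnion]
    rw [hW.2]
  obtain ⟨δ, hδ, hball⟩ := lebesgue_number_lemma_of_metric isCompact_univ
    (fun w : {w // w ∈ (W : Set (Set X))} => hW.1 w w.2) hcov
  refine ⟨δ / 2, by linarith, fun x => ?_⟩
  obtain ⟨w, hw⟩ := hball x (Set.mem_univ x)
  exact ⟨w, w.2, le_trans (le_of_eq rfl)
    ((Metric.closedBall_subset_ball (by linarith)).trans hw)⟩

lemma exists_ball_cover [CompactSpace X] {r : ℝ} (hr : 0 < r) :
    ∃ Wst : Finset (Set X), IsFinOpenCover Wst ∧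
      ∀ w ∈ Wst, ∃ z : X, w = Metric.ball z r := by
  classical
  have hcov : (Set.univ : Set X) ⊆ ⋃ x : X, Metric.ball x r :=
    fun x _ => Set.mem_iUnion.2 ⟨x, Metric.mem_ball_self hr⟩
  obtain ⟨t, ht⟩ := isCompact_univ.elim_finite_subcover (fun x : X => Metric.ball x r)
    (fun x => Metric.isOpen_ball) hcov
  refine ⟨t.image (fun z => Metric.ball z r), ⟨?_, ?_⟩, ?_⟩
  · intro u hu
    simp only [Finset.mem_image] at hu
    obtain ⟨z, -, rfl⟩ := hu
    exact Metric.isOpen_ball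
  · apply Set.eq_univ_of_univ_subset
    intro x hx
    obtain ⟨B, hB, hxB⟩ := Set.mem_iUnion₂.1 (ht hx)
    exact ⟨Metric.ball B r, by simp only [Finset.coe_image, Set.mem_image, Finset.mem_coe]; exact ⟨B, hB, rfl⟩, hxB⟩
  · intro u hu
    simp only [Finset.mem_image] at hu
    obtain ⟨z, -, rfl⟩ := hu
    exact ⟨z, rfl⟩
end AuxMetric
section AuxStep
open Filter

lemma ereal_ge_of_le_add {x : EReal} {a b : ℝ} (h : (a : EReal) ≤ x + (b : EReal)) :
    ((a - b : ℝ) : EReal) ≤ x := by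
  induction x using EReal.rec with
  | bot =>
      rw [EReal.bot_add] at h
      exact absurd h (by simp)
  | coe r =>
      rw [← EReal.coe_add] at h
      have := EReal.coe_le_coe_iff.1 h
      exact EReal.coe_le_coe_iff.2 (by linarith)
  | top => exact le_top

variable {X : Type*} [MetricSpace X] [CompactSpace X]

lemma step_exists [Nonempty X]
    {T : X → X} (hT : Continuous T)
    {W Wst : Finset (Set X)} (hW : IsFinOpenCover W) (hWst : IsFinOpenCover Wst)
    {lam : ℝ} (hlam : 0 < lam)
    (hWb : ∀ w ∈ Wst, ∃ z : X, w = Metric.ball z (lam / 20))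
    (hLeb : ∀ x : X, ∃ w ∈ W, Metric.closedBall x lam ⊆ w)
    {ceps a θ : ℝ} (hθ : 0 ≤ θ) (ha0 : 0 < a) (hgap : θ < a - ceps)
    (hcond : ∀ E : Set X, coverEntropy T E ≤ coverEntropyOf T W E + (ceps : EReal))
    {E : Set X} {ν : ℕ} (hEcpt : IsCompact E) (hEent : coverEntropy T E = (a : EReal))
    (hEcell : ∃ V ∈ dynRefine T (↑W) ν, E ⊆ V) :
    ∃ (E' : Set X) (m : ℕ) (Q : Finset X) (B : Set X),
      ν < m ∧
      IsCompact E' ∧ E' ⊆ E ∧ coverEntropy T E' = (a : EReal) ∧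
      (∃ V ∈ dynRefine T (↑W) (m + 1), E' ⊆ V) ∧
      ↑Q ⊆ E ∧ IsDynSep T m lam Q ∧
      Real.exp (θ * m) ≤ (Q.card : ℝ) ∧ (Q.card : ℝ) ≤ Real.exp (θ * m) + 1 ∧
      (∀ n, n < m → ((coverNum (dynRefine T (↑W) n) E : ℕ) : ℝ) ≤ Real.exp (θ * n) + 1) ∧
      IsClosed B ∧ B ⊆ E ∧ ↑Q ⊆ B ∧
      (∀ n : ℕ, coverNum (dynRefine T (↑W) n) B ≤ Q.card + 1) := by
  classical
  -- E is nonempty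
  have hEne : E.Nonempty := by
    rcases Set.eq_empty_or_nonempty E with hE0 | hE0
    · exfalso
      have h1 := coverEntropy_empty_le T
      rw [← hE0] at h1
      rw [hEent] at h1
      have : a ≤ (0 : ℝ) := by exact_mod_cast h1
      linarith
    · exact hE0
  -- lower bound on the W-counting limsup
  have hLW : ((a - ceps : ℝ) : EReal) ≤ coverEntropyOf T W E := by
    apply ereal_ge_of_le_add
    rw [← hEent]
    exact hcond E
  have hlt : (θ : EReal) < coverEntropyOf T W E := by
    refine lt_of_lt_of_le ?_ hLW
    exact_mod_cast hgap
  rw [← limsupW_eq] at hlt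
  have hfreq := frequently_lt_of_lt_limsup (by isBoundedDefault) hlt
  -- the crossing set is nonempty
  have hSne : ∃ n : ℕ, ν < n ∧
      Real.exp (θ * n) ≤ ((coverNum (dynRefine T (↑W) n) E : ℕ) : ℝ) := by
    obtain ⟨n, hn1, hn2⟩ := (hfreq.and_eventually (Filter.eventually_ge_atTop (ν + 1))).exists
    have hν : ν < n := by omega
    have hn0 : (0:ℝ) < (n : ℝ) := by
      have : 1 ≤ n := by omega
      exact_mod_cast this
    rw [EReal.coe_lt_coe_iff] at hn1
    rw [lt_div_iff₀ hn0] at hn1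
    have hcN1 : 1 ≤ coverNum (dynRefine T (↑W) n) E :=
      one_le_coverNum (coversUniv_dynRefine T hW.2 n)
    have hcNpos : (0:ℝ) < ((coverNum (dynRefine T (↑W) n) E : ℕ) : ℝ) := by exact_mod_cast hcN1
    refine ⟨n, hν, ?_⟩
    have := Real.exp_log hcNpos
    calc Real.exp (θ * n) ≤ Real.exp (Real.log ((coverNum (dynRefine T (↑W) n) E : ℕ) : ℝ)) :=
          Real.exp_le_exp.2 (le_of_lt hn1)
      _ = _ := this
  set S : Set ℕ := {n : ℕ | ν < n ∧
      Real.exp (θ * n) ≤ ((coverNum (dynRefine T (↑W) n) E : ℕ) : ℝ)} with hSdef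
  have hSne' : S.Nonempty := hSne
  set m : ℕ := sInf S with hmdef
  have hmS : m ∈ S := Nat.sInf_mem hSne'
  have hνm : ν < m := hmS.1
  have hmcross : Real.exp (θ * m) ≤ ((coverNum (dynRefine T (↑W) m) E : ℕ) : ℝ) := hmS.2
  -- property (8): below the crossing the counting is small
  have hbelow : ∀ n, n < m → ((coverNum (dynRefine T (↑W) n) E : ℕ) : ℝ)
      ≤ Real.exp (θ * n) + 1 := by
    intro n hnm
    have hnS : n ∉ S := Nat.notMem_of_lt_sInf (by rw [← hmdef]; exact hnm)
    by_cases hνn : ν < n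
    · have : ¬ Real.exp (θ * n) ≤ ((coverNum (dynRefine T (↑W) n) E : ℕ) : ℝ) := by
        intro hcon
        exact hnS ⟨hνn, hcon⟩
      push_neg at this
      linarith
    · push_neg at hνn
      obtain ⟨V, hV, hEV⟩ := hEcell
      obtain ⟨V', hV', hVV'⟩ := dynRefine_prefix hνn hV
      have h1 : coverNum (dynRefine T (↑W) n) E ≤ 1 :=
        coverNum_le_one_of_subset_cell hV' (hEV.trans hVV')
      have h2 : ((coverNum (dynRefine T (↑W) n) E : ℕ) : ℝ) ≤ 1 := by exact_mod_cast h1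
      have h3 : (1:ℝ) ≤ Real.exp (θ * n) := Real.one_le_exp (by positivity)
      linarith
  -- harvest a separated set
  obtain ⟨Q', hQ'E, hQ'sep, hQ'ge⟩ := exists_sep_ge_coverNum (T := T) (W := W) hlam
    hWst.2 hWb hLeb hEne m
  have hQ'big : Real.exp (θ * m) ≤ (Q'.card : ℝ) := by
    refine le_trans hmcross ?_
    exact_mod_cast hQ'ge
  set D : ℕ := ⌈Real.exp (θ * m)⌉₊ with hDdef
  have hDQ' : D ≤ Q'.card := Nat.ceil_le.2 hQ'big
  obtain ⟨Q, hQQ', hQcard⟩ := Finset.exists_subset_card_eq hDQ'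
  have hQE : ↑Q ⊆ E := fun p hp => hQ'E (Finset.coe_subset.2 hQQ' hp)
  have hQsep : IsDynSep T m lam Q :=
    fun p hp q hq hne => hQ'sep p (hQQ' hp) q (hQQ' hq) hne
  have hQlb : Real.exp (θ * m) ≤ (Q.card : ℝ) := by
    rw [hQcard]
    exact Nat.le_ceil _
  have hQub : (Q.card : ℝ) ≤ Real.exp (θ * m) + 1 := by
    rw [hQcard]
    exact le_of_lt (Nat.ceil_lt_add_one (by positivity))
  -- branch sets
  have hwsel : ∀ (p : X) (i : ℕ), ∃ w' : Set X, w' ∈ Wst ∧ T^[i] p ∈ w' := by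
    intro p i
    have : T^[i] p ∈ ⋃₀ (Wst : Set (Set X)) := by rw [hWst.2]; trivial
    obtain ⟨w', hw', hmem⟩ := this
    exact ⟨w', hw', hmem⟩
  choose wst hwst1 hwst2 using hwsel
  have hclsel : ∀ (p : X) (i : ℕ), ∃ w : Set X, w ∈ W ∧ closure (wst p i) ⊆ w := by
    intro p i
    obtain ⟨z, hz⟩ := hWb _ (hwst1 p i)
    obtain ⟨w, hwW, hcb⟩ := hLeb z
    refine ⟨w, hwW, ?_⟩
    rw [hz]
    refine le_trans Metric.closure_ball_subset_closedBall ?_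
    exact le_trans (Metric.closedBall_subset_closedBall (by linarith)) hcb
  choose wbig hwbig1 hwbig2 using hclsel
  set A : X → Set X := fun p => E ∩ ⋂ i : ℕ, T^[i] ⁻¹' closure (wst p i) with hAdef
  have hApmem : ∀ p ∈ Q, p ∈ A p := by
    intro p hp
    refine ⟨hQE hp, ?_⟩
    simp only [Set.mem_iInter, Set.mem_preimage]
    exact fun i => subset_closure (hwst2 p i)
  have hAsub : ∀ p : X, A p ⊆ E := fun p => Set.inter_subset_left
  have hAclosed : ∀ p : X, IsClosed (A p) := by
    intro p
    refine IsClosed.inter hEcpt.isClosed (isClosed_iInter fun i => ?_)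
    exact isClosed_closure.preimage (hT.iterate i)
  have hAcell : ∀ (p : X) (n : ℕ), ∃ V ∈ dynRefine T (↑W) n, A p ⊆ V := by
    intro p n
    refine ⟨⋂ i ∈ Finset.range n, T^[i] ⁻¹' (wbig p i),
      ⟨fun i => wbig p i, fun i _ => hwbig1 p i, rfl⟩, ?_⟩
    intro x hx
    simp only [Set.mem_iInter, Finset.mem_range, Set.mem_preimage]
    intro i _
    apply hwbig2 p i
    exact Set.mem_iInter.1 hx.2 i
  set B : Set X := ⋃ p ∈ Q, A p with hBdef
  have hBclosed : IsClosed B :=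
    Set.Finite.isClosed_biUnion (Q.finite_toSet) (fun p _ => hAclosed p)
  have hBsub : B ⊆ E := by
    intro x hx
    obtain ⟨p, -, hpx⟩ := Set.mem_iUnion₂.1 hx
    exact hAsub p hpx
  have hQB : ↑Q ⊆ B := by
    intro p hp
    exact Set.mem_iUnion₂.2 ⟨p, Finset.mem_coe.1 hp, hApmem p (Finset.mem_coe.1 hp)⟩
  have hBcount : ∀ n : ℕ, coverNum (dynRefine T (↑W) n) B ≤ Q.card + 1 := by
    intro n
    rw [hBdef]
    have h1 := coverNum_biUnion_le (coversUniv_dynRefine T hW.2 n) Q A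
    have h2 : (∑ p ∈ Q, coverNum (dynRefine T (↑W) n) (A p)) ≤ Q.card := by
      have h3 : ∀ p ∈ Q, coverNum (dynRefine T (↑W) n) (A p) ≤ 1 := by
        intro p _
        obtain ⟨V, hV, hAV⟩ := hAcell p n
        exact coverNum_le_one_of_subset_cell hV hAV
      calc (∑ p ∈ Q, coverNum (dynRefine T (↑W) n) (A p)) ≤ ∑ p ∈ Q, 1 :=
            Finset.sum_le_sum h3
        _ = Q.card := by simp
    omega
  -- next reservoir piece at depth m + 1
  obtain ⟨x0⟩ := ‹Nonempty X›
  obtain ⟨w0, hw0⟩ : ∃ w0 : Set X, w0 ∈ Wst := ⟨wst x0 0, hwst1 x0 0⟩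
  have hNE : Nonempty (Fin (m + 1) → {w // w ∈ Wst}) := ⟨fun _ => ⟨w0, hw0⟩⟩
  set piece : (Fin (m + 1) → {w // w ∈ Wst}) → Set X := fun φ =>
    E ∩ ⋂ i ∈ Finset.range (m + 1), T^[i] ⁻¹'
      closure (if h : i < m + 1 then ((φ ⟨i, h⟩ : Set X)) else Set.univ) with hpiecedef
  have hpcov : E ⊆ ⋃ φ ∈ (Finset.univ : Finset (Fin (m + 1) → {w // w ∈ Wst})), piece φ := by
    intro x hx
    set φ : Fin (m + 1) → {w // w ∈ Wst} := fun i => ⟨wst x i, hwst1 x i⟩ with hφdef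
    refine Set.mem_iUnion₂.2 ⟨φ, Finset.mem_univ _, hx, ?_⟩
    simp only [Set.mem_iInter, Finset.mem_range, Set.mem_preimage]
    intro i hi
    simp only [hi, dif_pos]
    exact subset_closure (hwst2 x i)
  have hpsub : ∀ φ, piece φ ⊆ E := fun φ => Set.inter_subset_left
  obtain ⟨φ0, -, hφ0ent⟩ := exists_piece_entropy_eq (T := T) Finset.univ_nonempty piece hpcov
    (fun φ _ => hpsub φ)
  set E' : Set X := piece φ0 with hE'def
  have hE'cpt : IsCompact E' := by
    refine hEcpt.inter_right ?_
    refine isClosed_biInter fun i hi => ?_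
    exact isClosed_closure.preimage (hT.iterate i)
  have hE'cell : ∃ V ∈ dynRefine T (↑W) (m + 1), E' ⊆ V := by
    have hsel2 : ∀ i : ℕ, ∃ w : Set X, (i < m + 1 → w ∈ W ∧
        closure (if h : i < m + 1 then ((φ0 ⟨i, h⟩ : Set X)) else Set.univ) ⊆ w) := by
      intro i
      by_cases hi : i < m + 1
      · obtain ⟨z, hz⟩ := hWb _ (φ0 ⟨i, hi⟩).2
        obtain ⟨w, hwW, hcb⟩ := hLeb z
        refine ⟨w, fun _ => ⟨hwW, ?_⟩⟩
        have hd : (if h : i < m + 1 then ((φ0 ⟨i, h⟩ : Set X)) else Set.univ)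
            = ((φ0 ⟨i, hi⟩ : Set X)) := dif_pos hi
        rw [hd, hz]
        exact le_trans Metric.closure_ball_subset_closedBall
          (le_trans (Metric.closedBall_subset_closedBall (by linarith)) hcb)
      · exact ⟨Set.univ, fun h => absurd h hi⟩
    choose ww hww using hsel2
    refine ⟨⋂ i ∈ Finset.range (m + 1), T^[i] ⁻¹' ww i,
      ⟨ww, fun i hi => (hww i hi).1, rfl⟩, ?_⟩
    intro x hx
    simp only [Set.mem_iInter, Finset.mem_range, Set.mem_preimage]
    intro i hi
    apply (hww i hi).2
    have := hx.2
    simp only [Set.mem_iInter, Finset.mem_range, Set.mem_preimage] at this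
    exact this i hi
  exact ⟨E', m, Q, B, hνm, hE'cpt, hpsub φ0, hφ0ent.trans hEent, hE'cell, hQE, hQsep,
    hQlb, hQub, hbelow, hBclosed, hBsub, hQB, hBcount⟩

end AuxStep
section AuxFinal
open Filter

lemma ereal_between {x : EReal} {l u : ℝ} (hl : (l : EReal) ≤ x) (hu : x ≤ (u : EReal)) :
    ∃ r : ℝ, x = (r : EReal) ∧ l ≤ r ∧ r ≤ u := by
  induction x using EReal.rec with
  | bot => exact absurd hl (by simp)
  | coe r => exact ⟨r, rfl, by exact_mod_cast hl, by exact_mod_cast hu⟩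
  | top => exact absurd hu (by simp)

variable {X : Type*} [MetricSpace X]

lemma sep_le_coverNum {T : X → X} {Wst : Finset (Set X)} {lam : ℝ} (hlam : 0 < lam)
    (hWstU : ⋃₀ (↑Wst : Set (Set X)) = Set.univ)
    (hWb : ∀ w ∈ Wst, ∃ z : X, w = Metric.ball z (lam / 20))
    {m : ℕ} {Q : Finset X} (hQ : IsDynSep T m lam Q) {K' : Set X} (hQK : ↑Q ⊆ K') :
    Q.card ≤ coverNum (dynRefine T (↑Wst) m) K' := by
  classical
  by_cases hK0 : K' = ∅
  · have hQ0 : Q = ∅ := by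
      rw [hK0] at hQK
      exact Finset.coe_eq_empty.1 (Set.subset_eq_empty hQK rfl)
    simp [hQ0, coverNum, hK0]
  · obtain ⟨Fm, hFm, hFmc, hFmcard, -⟩ := exists_min_cover (coversUniv_dynRefine T hWstU m) hK0
    rw [← hFmcard]
    set g : X → Set X := fun p => if h : ∃ V ∈ Fm, p ∈ V then h.choose else ∅ with hgdef
    have hg : ∀ p ∈ Q, g p ∈ Fm ∧ p ∈ g p := by
      intro p hp
      obtain ⟨V, hV, hpV⟩ := hFmc (hQK hp)
      have hex : ∃ V ∈ Fm, p ∈ V := ⟨V, Finset.mem_coe.1 hV, hpV⟩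
      rw [hgdef]
      simp only [hex, dif_pos]
      exact hex.choose_spec
    refine Finset.card_le_card_of_injOn g (fun p hp => (hg p (Finset.mem_coe.1 hp)).1) ?_
    intro p hp q hq hgpq
    have h1 := (hg p (Finset.mem_coe.1 hp)).2
    have h2 := (hg q (Finset.mem_coe.1 hq)).2
    rw [hgpq] at h1
    exact cell_small_inj hlam hWb (hFm (Finset.mem_coe.2 (hg q (Finset.mem_coe.1 hq)).1)) hQ
      (Finset.mem_coe.1 hp) (Finset.mem_coe.1 hq) h1 h2

end AuxFinal

/-- A stage of the lowering construction. -/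
structure LowerStage {X : Type*} [TopologicalSpace X] (T : X → X) (W : Finset (Set X))
    (K : Set X) (a : ℝ) where
  E : Set X
  ν : ℕ
  cpt : IsCompact E
  sub : E ⊆ K
  ent : coverEntropy T E = (a : EReal)
  cell : ∃ V ∈ dynRefine T (↑W) ν, E ⊆ V

/-- The data produced by one step of the lowering construction. -/
structure LowerStep {X : Type*} [MetricSpace X] (T : X → X) (W : Finset (Set X))
    (K : Set X) (a lam θ : ℝ) (s : LowerStage T W K a) where
  next : LowerStage T W K a
  m : ℕ
  Q : Finset X
  B : Set X
  hνm : s.ν < m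
  hnextν : next.ν = m + 1
  hnextsub : next.E ⊆ s.E
  hQE : ↑Q ⊆ s.E
  hQsep : IsDynSep T m lam Q
  hQlb : Real.exp (θ * m) ≤ (Q.card : ℝ)
  hQub : (Q.card : ℝ) ≤ Real.exp (θ * m) + 1
  hbelow : ∀ n, n < m → ((coverNum (dynRefine T (↑W) n) s.E : ℕ) : ℝ) ≤ Real.exp (θ * n) + 1
  hBclosed : IsClosed B
  hBsub : B ⊆ s.E
  hQB : ↑Q ⊆ B
  hBcount : ∀ n : ℕ, coverNum (dynRefine T (↑W) n) B ≤ Q.card + 1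

section MainDelta
open Filter

lemma main_delta {X : Type*} [MetricSpace X] [CompactSpace X]
    (T : X → X) (hT : Continuous T)
    (K : Set X) (hK : IsCompact K) (a c : ℝ)
    (ha : coverEntropy T K = (a : EReal)) (hc : condTopEntropy T = (c : EReal))
    (hgt : c < a) (h : ℝ) (h0 : 0 ≤ h) (hle : h ≤ a - c) {δ : ℝ} (hδ : 0 < δ) :
    ∃ r : ℝ, (∃ K' : Set X, K' ⊆ K ∧ IsCompact K' ∧ coverEntropy T K' = (r : EReal)) ∧
      h - δ ≤ r ∧ r ≤ h + c := by
  classical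
  have hc0 : 0 ≤ c := by
    have h1 := condTopEntropy_nonneg T
    rw [hc] at h1
    exact_mod_cast h1
  have ha0 : 0 < a := lt_of_le_of_lt hc0 hgt
  have hKne : K.Nonempty := by
    rcases Set.eq_empty_or_nonempty K with h1 | h1
    · exfalso
      have h2 := coverEntropy_empty_le T
      rw [← h1, ha] at h2
      have h3 : a ≤ (0:ℝ) := by exact_mod_cast h2
      linarith
    · exact h1
  obtain ⟨x0, hx0⟩ := hKne
  have hXne : Nonempty X := ⟨x0⟩
  set ε : ℝ := δ / 4 with hεdef
  have hε : 0 < ε := by rw [hεdef]; linarith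
  set θ : ℝ := h - 2 * ε with hθdef
  by_cases hθ0 : θ < 0
  · refine ⟨0, ⟨{x0}, Set.singleton_subset_iff.2 hx0, isCompact_singleton, ?_⟩, ?_, ?_⟩
    · rw [coverEntropy_singleton]
      exact EReal.coe_zero.symm
    · have h1 : h - 2 * ε < 0 := hθ0
      rw [hεdef] at h1
      linarith
    · linarith
  · push_neg at hθ0
    obtain ⟨W, hW, hWgood⟩ := exists_good_W hc hε
    have hcond := coverEntropy_le_W_add (T := T) hW hWgood
    obtain ⟨lam, hlam, hLeb⟩ := exists_lebesgue_closedBall hW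
    obtain ⟨Wst, hWst, hWb⟩ := exists_ball_cover (X := X) (r := lam / 20) (by linarith)
    have hgap : θ < a - (c + ε) := by
      have hθeq : θ = h - 2 * ε := hθdef
      linarith
    -- the recursion
    have hstep : ∀ s : LowerStage T W K a, Nonempty (LowerStep T W K a lam θ s) := by
      intro s
      obtain ⟨E', m, Q, B, h1, h2, h3, h4, h5, h6, h7, h8, h9, h10, h11, h12, h13, h14⟩ :=
        step_exists hT hW hWst hlam hWb hLeb hθ0 ha0 hgap hcond s.cpt s.ent s.cell
      exact ⟨⟨⟨E', m + 1, h2, h3.trans s.sub, h4, h5⟩, m, Q, B, h1, rfl, h3, h6, h7,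
        h8, h9, h10, h11, h12, h13, h14⟩⟩
    let Fn : ∀ s : LowerStage T W K a, LowerStep T W K a lam θ s :=
      fun s => Classical.choice (hstep s)
    let s0 : LowerStage T W K a :=
      ⟨K, 0, hK, subset_rfl, ha, ⟨Set.univ, univ_mem_dynRefine_zero T (↑W), Set.subset_univ K⟩⟩
    let seq : ℕ → LowerStage T W K a :=
      fun k => Nat.rec s0 (fun _ s => (Fn s).next) k
    have hseq0 : seq 0 = s0 := rfl
    have hseqsucc : ∀ k, seq (k + 1) = (Fn (seq k)).next := fun k => rfl
    have hν : ∀ k, k ≤ (seq k).ν := by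
      intro k
      induction k with
      | zero => exact Nat.zero_le _
      | succ k ih =>
          have h1 := (Fn (seq k)).hνm
          have h2 := (Fn (seq k)).hnextν
          rw [hseqsucc k, h2]
          omega
    have hmono : ∀ j k, j ≤ k → (seq k).E ⊆ (seq j).E := by
      intro j k hjk
      induction k with
      | zero =>
          have : j = 0 := by omega
          subst this
          exact subset_rfl
      | succ k ih =>
          rcases Nat.lt_or_ge j (k + 1) with h1 | h1
          · refine le_trans ?_ (ih (by omega))
            rw [hseqsucc k]
            exact (Fn (seq k)).hnextsub
          · have : j = k + 1 := by omega
            subst this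
            exact subset_rfl
    set layer : ℕ → Set X :=
      fun j => (⋃ k ∈ Finset.range j, (Fn (seq k)).B) ∪ (seq j).E with hlayerdef
    set K' : Set X := ⋂ j : ℕ, layer j with hK'def
    have hlayerclosed : ∀ j, IsClosed (layer j) := by
      intro j
      refine IsClosed.union ?_ (seq j).cpt.isClosed
      exact Set.Finite.isClosed_biUnion (Finset.range j).finite_toSet
        (fun k _ => (Fn (seq k)).hBclosed)
    have hK'closed : IsClosed K' := isClosed_iInter hlayerclosed
    have hK'cpt : IsCompact K' := hK'closed.isCompact
    have hlayer0 : layer 0 = K := by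
      have h1 : (seq 0).E = K := rfl
      rw [hlayerdef]
      simp [h1]
    have hK'K : K' ⊆ K := by
      rw [← hlayer0]
      exact Set.iInter_subset _ 0
    have hQsubK' : ∀ k, (↑((Fn (seq k)).Q) : Set X) ⊆ K' := by
      intro k p hp
      refine Set.mem_iInter.2 fun j => ?_
      rcases Nat.lt_or_ge k j with hjk | hjk
      · exact Set.mem_union_left _
          (Set.mem_biUnion (Finset.mem_range.2 hjk) ((Fn (seq k)).hQB hp))
      · refine Set.mem_union_right _ ?_
        exact hmono j k hjk ((Fn (seq k)).hBsub ((Fn (seq k)).hQB hp))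
    -- upper counting bound
    have hK'count : ∀ n : ℕ, ((coverNum (dynRefine T (↑W) n) K' : ℕ) : ℝ)
        ≤ n * (Real.exp (θ * n) + 2) + 2 := by
      intro n
      have hV := coversUniv_dynRefine T hW.2 n
      have h1 : coverNum (dynRefine T (↑W) n) K' ≤ coverNum (dynRefine T (↑W) n) (layer n) :=
        coverNum_mono_set hV (Set.iInter_subset _ n)
      have h4 : coverNum (dynRefine T (↑W) n) (seq n).E ≤ 1 := by
        obtain ⟨V, hVm, hEV⟩ := (seq n).cell
        obtain ⟨V', hV', hVV'⟩ := dynRefine_prefix (hν n) hVm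
        exact coverNum_le_one_of_subset_cell hV' (hEV.trans hVV')
      have h2 : coverNum (dynRefine T (↑W) n) (layer n) ≤
          (∑ k ∈ Finset.range n, coverNum (dynRefine T (↑W) n) ((Fn (seq k)).B)) + 2 := by
        rw [hlayerdef]
        refine le_trans (coverNum_union_le hV) ?_
        have h3 := coverNum_biUnion_le hV (Finset.range n) (fun k => (Fn (seq k)).B)
        omega
      have h5 : ∀ k ∈ Finset.range n, ((coverNum (dynRefine T (↑W) n) ((Fn (seq k)).B) : ℕ) : ℝ)
          ≤ Real.exp (θ * n) + 2 := by
        intro k hk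
        rcases Nat.lt_or_ge n ((Fn (seq k)).m) with hnm | hnm
        · have h6 : coverNum (dynRefine T (↑W) n) ((Fn (seq k)).B) ≤
              coverNum (dynRefine T (↑W) n) (seq k).E :=
            coverNum_mono_set hV (Fn (seq k)).hBsub
          have h7 := (Fn (seq k)).hbelow n hnm
          have h8 : ((coverNum (dynRefine T (↑W) n) ((Fn (seq k)).B) : ℕ) : ℝ)
              ≤ ((coverNum (dynRefine T (↑W) n) (seq k).E : ℕ) : ℝ) := by exact_mod_cast h6
          linarith
        · have h6 := (Fn (seq k)).hBcount n
          have h7 := (Fn (seq k)).hQub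
          have h8 : Real.exp (θ * (Fn (seq k)).m) ≤ Real.exp (θ * n) := by
            apply Real.exp_le_exp.2
            have : ((Fn (seq k)).m : ℝ) ≤ (n : ℝ) := by exact_mod_cast hnm
            nlinarith
          have h9 : ((coverNum (dynRefine T (↑W) n) ((Fn (seq k)).B) : ℕ) : ℝ)
              ≤ ((Fn (seq k)).Q.card : ℝ) + 1 := by exact_mod_cast h6
          linarith
      have h10 : ((∑ k ∈ Finset.range n, coverNum (dynRefine T (↑W) n) ((Fn (seq k)).B) : ℕ) : ℝ)
          ≤ n * (Real.exp (θ * n) + 2) := by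
        push_cast
        calc (∑ k ∈ Finset.range n, ((coverNum (dynRefine T (↑W) n) ((Fn (seq k)).B) : ℕ) : ℝ))
            ≤ ∑ _k ∈ Finset.range n, (Real.exp (θ * n) + 2) := Finset.sum_le_sum h5
          _ = n * (Real.exp (θ * n) + 2) := by
              rw [Finset.sum_const, Finset.card_range, nsmul_eq_mul]
      have h11 : ((coverNum (dynRefine T (↑W) n) K' : ℕ) : ℝ)
          ≤ ((((∑ k ∈ Finset.range n, coverNum (dynRefine T (↑W) n) ((Fn (seq k)).B)) + 2 : ℕ)) : ℝ) := by
        exact_mod_cast le_trans h1 h2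
      push_cast at h10 h11
      linarith
    -- upper entropy bound
    have hupW : coverEntropyOf T W K' ≤ (θ : EReal) := by
      have hpt : ∀ n : ℕ, 1 ≤ n → Real.log (coverNum (dynRefine T (↑W) n) K') / n
          ≤ Real.log (4 * ((n : ℝ) + 1)) / n + θ := by
        intro n hn1
        have hnpos : (0:ℝ) < n := by exact_mod_cast hn1
        have hcN1 : 1 ≤ coverNum (dynRefine T (↑W) n) K' :=
          one_le_coverNum (coversUniv_dynRefine T hW.2 n)
        have hexp1 : (1:ℝ) ≤ Real.exp (θ * n) := Real.one_le_exp (by positivity)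
        have hb : ((coverNum (dynRefine T (↑W) n) K' : ℕ) : ℝ)
            ≤ 4 * ((n : ℝ) + 1) * Real.exp (θ * n) := by
          have h1 := hK'count n
          nlinarith
        have hlog : Real.log (coverNum (dynRefine T (↑W) n) K')
            ≤ Real.log (4 * ((n : ℝ) + 1)) + θ * n := by
          calc Real.log (coverNum (dynRefine T (↑W) n) K')
              ≤ Real.log (4 * ((n : ℝ) + 1) * Real.exp (θ * n)) :=
                Real.log_le_log (by exact_mod_cast hcN1) hb
            _ = Real.log (4 * ((n : ℝ) + 1)) + Real.log (Real.exp (θ * n)) :=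
                Real.log_mul (by positivity) (by positivity)
            _ = Real.log (4 * ((n : ℝ) + 1)) + θ * n := by rw [Real.log_exp]
        have h2 : Real.log (coverNum (dynRefine T (↑W) n) K') / n
            ≤ (Real.log (4 * ((n : ℝ) + 1)) + θ * n) / n := by
          gcongr
        have h3 : (Real.log (4 * ((n : ℝ) + 1)) + θ * n) / n
            = Real.log (4 * ((n : ℝ) + 1)) / n + θ := by
          rw [add_div]
          congr 1
          field_simp
        linarith
      show Filter.atTop.limsup _ ≤ _
      calc Filter.atTop.limsup
            (fun n => ((Real.log (coverNum (dynRefine T (↑W) n) K') / n : ℝ) : EReal))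
          ≤ Filter.atTop.limsup
            (fun n : ℕ => ((Real.log (4 * ((n : ℝ) + 1)) / (n : ℝ) + θ : ℝ) : EReal)) := by
            refine limsup_le_limsup ?_
            filter_upwards [Filter.eventually_ge_atTop 1] with n hn
            exact EReal.coe_le_coe_iff.2 (hpt n hn)
        _ ≤ Filter.atTop.limsup (fun _ : ℕ => ((θ : ℝ) : EReal)) := by
            refine limsup_coe_add_vanishing_le (fun n => ?_) (fun η hη => ?_)
            · apply div_nonneg _ (Nat.cast_nonneg n)
              apply Real.log_nonneg
              have h1 : (0:ℝ) ≤ (n : ℝ) := Nat.cast_nonneg n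
              linarith
            · exact eventually_log_mul_le (by norm_num) hη
        _ = (θ : EReal) := limsup_const _
    have hup : coverEntropy T K' ≤ ((θ + (c + ε) : ℝ) : EReal) := by
      refine le_trans (hcond K') ?_
      rw [EReal.coe_add]
      exact add_le_add_left hupW _
    -- lower entropy bound
    have hlowWst : (θ : EReal) ≤ coverEntropyOf T Wst K' := by
      rw [← limsupW_eq]
      refine le_limsup_of_frequently_le ?_ (by isBoundedDefault)
      rw [Filter.frequently_atTop]
      intro N
      refine ⟨(Fn (seq N)).m, ?_, ?_⟩
      · have h1 := hν N
        have h2 := (Fn (seq N)).hνm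
        omega
      · have h1 := hν N
        have h2 := (Fn (seq N)).hνm
        have hmpos : 0 < (Fn (seq N)).m := by omega
        have hsep := sep_le_coverNum hlam hWst.2 hWb (Fn (seq N)).hQsep (hQsubK' N)
        have h3 : Real.exp (θ * (Fn (seq N)).m)
            ≤ ((coverNum (dynRefine T (↑Wst) (Fn (seq N)).m) K' : ℕ) : ℝ) :=
          le_trans (Fn (seq N)).hQlb (by exact_mod_cast hsep)
        have h4 : θ * (Fn (seq N)).m
            ≤ Real.log (coverNum (dynRefine T (↑Wst) (Fn (seq N)).m) K') := by
          have h5 := Real.log_le_log (Real.exp_pos _) h3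
          rwa [Real.log_exp] at h5
        apply EReal.coe_le_coe_iff.2
        rw [le_div_iff₀ (by exact_mod_cast hmpos : (0:ℝ) < ((Fn (seq N)).m : ℝ))]
        linarith
    have hlow : (θ : EReal) ≤ coverEntropy T K' :=
      le_trans hlowWst (coverEntropyOf_le_coverEntropy hWst K')
    obtain ⟨r, hr1, hr2, hr3⟩ := ereal_between hlow hup
    refine ⟨r, ⟨K', hK'K, hK'cpt, hr1⟩, ?_, ?_⟩
    · have hθeq : θ = h - 2 * ε := hθdef
      rw [hεdef] at hθeq
      linarith
    · have hθeq : θ = h - 2 * ε := hθdef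
      rw [hεdef] at hθeq
      linarith

end MainDelta
/-- If `h(T, K) > h^*(T, X)` then for each `0 ≤ h ≤ h(T, K) - h^*(T, X)` the closure of
`{h(T, K') : K' ⊆ K compact}` meets `[h, h + h^*(T, X)]`. -/
theorem closure_coverEntropies_meets_interval {X : Type*} [MetricSpace X] [CompactSpace X]
    (T : X ≃ₜ X) (hfin : coverEntropy (⇑T) Set.univ ≠ ⊤)
    (K : Set X) (hK : IsCompact K) (a c : ℝ)
    (ha : coverEntropy (⇑T) K = (a : EReal)) (hc : condTopEntropy (⇑T) = (c : EReal))
    (hgt : c < a) (h : ℝ) (h0 : 0 ≤ h) (hle : h ≤ a - c) :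
    (closure {r : ℝ | ∃ K' : Set X, K' ⊆ K ∧ IsCompact K' ∧
        coverEntropy (⇑T) K' = (r : EReal)} ∩ Set.Icc h (h + c)).Nonempty := by
  classical
  set S : Set ℝ := {r : ℝ | ∃ K' : Set X, K' ⊆ K ∧ IsCompact K' ∧
      coverEntropy (⇑T) K' = (r : EReal)} with hSdef
  have hmd : ∀ j : ℕ, ∃ r : ℝ, r ∈ S ∧ h - 1 / ((j : ℝ) + 1) ≤ r ∧ r ≤ h + c := by
    intro j
    have hδ : (0:ℝ) < 1 / ((j : ℝ) + 1) := by positivity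
    obtain ⟨r, h1, h2, h3⟩ := main_delta (⇑T) T.continuous K hK a c ha hc hgt h h0 hle hδ
    exact ⟨r, h1, h2, h3⟩
  choose f hf1 hf2 hf3 using hmd
  set s' : Set ℝ := S ∩ Set.Icc (h - 1) (h + c) with hs'def
  have hbd : Bornology.IsBounded s' :=
    (Metric.isBounded_Icc (h - 1) (h + c)).subset Set.inter_subset_right
  have hmem : ∀ j, f j ∈ s' := by
    intro j
    refine ⟨hf1 j, ⟨?_, hf3 j⟩⟩
    have h1 : 1 / ((j : ℝ) + 1) ≤ 1 := by
      rw [div_le_one (by positivity)]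
      have h2 : (0:ℝ) ≤ (j : ℝ) := Nat.cast_nonneg j
      linarith
    have h3 := hf2 j
    linarith
  obtain ⟨r, hrcl, φ, hφmono, hφtend⟩ := tendsto_subseq_of_bounded hbd hmem
  refine ⟨r, ?_, ?_, ?_⟩
  · exact closure_mono Set.inter_subset_left hrcl
  · have key : ∀ η : ℝ, 0 < η → h - η ≤ r := by
      intro η hη
      refine ge_of_tendsto hφtend ?_
      rw [Filter.eventually_atTop]
      obtain ⟨N, hN⟩ := exists_nat_gt (1 / η)
      refine ⟨N, fun j hj => ?_⟩
      have hφj : N ≤ φ j := le_trans hj (StrictMono.le_apply hφmono)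
      have h1 : 1 / ((φ j : ℝ) + 1) ≤ η := by
        rw [div_le_iff₀ (by positivity)]
        have h2 : 1 < (N : ℝ) * η := by
          have h4 := hN
          rw [div_lt_iff₀ hη] at h4
          exact h4
        have h3 : (N : ℝ) ≤ ((φ j : ℕ) : ℝ) := by exact_mod_cast hφj
        nlinarith
      have h5 := hf2 (φ j)
      show h - η ≤ (f ∘ φ) j
      simp only [Function.comp]
      linarith
    by_contra hcon
    push_neg at hcon
    have h6 := key ((h - r) / 2) (by linarith)
    linarith
  · refine le_of_tendsto hφtend ?_
    refine Filter.Eventually.of_forall fun j => ?_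
    exact hf3 (φ j)
end Lowering
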